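/- arXiv:1810.06220 — 3 statements merged into one kernel-verified Lean document; each statement's English description precedes it below -/
import Mathlib

section
/- For all integers k ≥ 1, the sum over l from 1 to k of S(k,l)·(-1)^l·(l+1)! equals (-2)^k, where S(k,l) denotes the Stirling number of the second kind. -/
/-- Stirling numbers of the second kind. -/
def stirling : ℕ → ℕ → ℕ
  | 0, 0 => 1
  | 0, _ + 1 => 0
  | _ + 1, 0 => 0
  | k + 1, l + 1 => stirling k l + (l + 1) * stirling k (l + 1)

lemma stirling_eq_zero_of_lt : ∀ k l : ℕ, k < l → stirling k l = 0
  | 0, _ + 1, _ => rfl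
  | k + 1, l + 1, h => by
    have h' : k < l := Nat.lt_of_succ_lt_succ h
    show stirling k l + (l + 1) * stirling k (l + 1) = 0
    rw [stirling_eq_zero_of_lt k l h', stirling_eq_zero_of_lt k (l + 1) (Nat.lt_succ_of_lt h')]
    ring

lemma stirling_aux (k : ℕ) :
    ∑ l ∈ Finset.range (k + 1), (stirling k l : ℤ) * (-1) ^ l * (Nat.factorial (l + 1) : ℤ)
      = (-2) ^ k := by
  induction k with
  | zero => simp [stirling]
  | succ k ih =>
    rw [Finset.sum_range_succ']
    have h0 : stirling (k + 1) 0 = 0 := rfl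
    rw [h0]
    have key : ∀ l ∈ Finset.range (k + 1),
        (stirling (k + 1) (l + 1) : ℤ) * (-1) ^ (l + 1) * (Nat.factorial (l + 1 + 1) : ℤ)
          = (-2) * ((stirling k l : ℤ) * (-1) ^ l * (Nat.factorial (l + 1) : ℤ))
            + ((((l + 1 : ℕ) : ℤ) * (stirling k (l + 1) : ℤ) * (-1) ^ (l + 1) *
                  (Nat.factorial (l + 1 + 1) : ℤ))
              - (((l : ℕ) : ℤ) * (stirling k l : ℤ) * (-1) ^ l *
                  (Nat.factorial (l + 1) : ℤ))) := by
      intro l _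
      show ((stirling k l + (l + 1) * stirling k (l + 1) : ℕ) : ℤ) * _ * _ = _
      rw [Nat.factorial_succ (l + 1)]
      push_cast
      ring
    rw [Finset.sum_congr rfl key, Finset.sum_add_distrib, Finset.sum_range_sub
      (fun l => ((l : ℤ) * (stirling k l : ℤ) * (-1) ^ l * (Nat.factorial (l + 1) : ℤ)))]
    rw [← Finset.mul_sum, ih, stirling_eq_zero_of_lt k (k + 1) (Nat.lt_succ_self k)]
    push_cast
    ring

/-- For all integers `k ≥ 1`, `∑_{l=1}^{k} S(k,l)·(-1)^l·(l+1)! = (-2)^k`. -/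
theorem stirling_alternating_factorial_sum (k : ℕ) (hk : 1 ≤ k) :
    ∑ l ∈ Finset.Icc 1 k, (stirling k l : ℤ) * (-1) ^ l * (Nat.factorial (l + 1) : ℤ)
      = (-2) ^ k := by
  obtain ⟨m, rfl⟩ := Nat.exists_eq_add_of_le hk
  have h := stirling_aux (1 + m)
  rw [Finset.range_eq_Ico, ← Finset.sum_Ico_consecutive _ (Nat.zero_le 1)
    (by omega : 1 ≤ 1 + m + 1)] at h
  have h0 : stirling (1 + m) 0 = 0 := by
    rw [show 1 + m = m + 1 by omega]; rfl
  rw [← Finset.Ico_add_one_right_eq_Icc]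
  simp only [Finset.sum_Ico_eq_sum_range, Nat.add_sub_cancel] at h ⊢
  simpa [h0, Finset.sum_range_one] using h
end

section
/- For a connected finite graph G with a chosen root vertex v₀, the Kirchhoff polynomial satisfies Ψ_G(α) = (∏_{e∈E} α_e) · det(I'ᵀ A⁻¹ I'), where I' is the reduced incidence matrix (incidence matrix with the column of v₀ deleted) and A is the diagonal matrix with entries α_e, with all α_e nonzero elements of a field. -/
/-- A finite multigraph with an orientation on each edge: every edge `e` has a
source `src e` and a target `tgt e`. -/
structure DirGraph (V E : Type*) where
  src : E → V
  tgt : E → V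

namespace DirGraph

variable {V E : Type*}

/-- `u` and `v` are joined by some edge of `S`. -/
def Adj (G : DirGraph V E) (S : Set E) (u v : V) : Prop :=
  ∃ e ∈ S, (G.src e = u ∧ G.tgt e = v) ∨ (G.src e = v ∧ G.tgt e = u)

/-- `T` is a spanning tree of `G`: the subgraph `(V, T)` is connected and
`|T| = |V| - 1`. -/
def IsSpanningTree [Fintype V] (G : DirGraph V E) (T : Finset E) : Prop :=
  (∀ u v : V, Relation.EqvGen (G.Adj ↑T) u v) ∧ T.card + 1 = Fintype.card V

open Classical in
/-- The Kirchhoff polynomial `Ψ_G(α) = ∑_{T spanning tree} ∏_{e ∉ T} α_e`. -/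
noncomputable def kirchhoff [Fintype V] [Fintype E] [DecidableEq E]
    {R : Type*} [CommRing R] (G : DirGraph V E) (α : E → R) : R :=
  ∑ T : Finset E, if G.IsSpanningTree T then ∏ e ∈ Tᶜ, α e else 0

/-- The incidence matrix of `G`: entry `(e, v)` is `+1` if `v` is the target of `e`,
`-1` if `v` is its source (and their difference in general, so `0` otherwise). -/
def inc [DecidableEq V] (G : DirGraph V E) (F : Type*) [Field F] : Matrix E V F :=
  fun e v => (if G.tgt e = v then 1 else 0) - (if G.src e = v then 1 else 0)

/-- The reduced incidence matrix: the incidence matrix with the column of the chosen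
root vertex `v₀` deleted. -/
def redInc [DecidableEq V] (G : DirGraph V E) (F : Type*) [Field F] (v₀ : V) :
    Matrix E {v : V // v ≠ v₀} F :=
  fun e v => G.inc F e v.val

end DirGraph

section MatrixTreeAux
open Matrix Finset Equiv

/-- Transfer of `EqvGen` along a map. -/
lemma eqvGen_map {α β : Type*} {r : α → α → Prop} {r' : β → β → Prop} (π : α → β)
    (h : ∀ a b, r a b → Relation.EqvGen r' (π a) (π b)) {a b : α}
    (hab : Relation.EqvGen r a b) : Relation.EqvGen r' (π a) (π b) := by
  induction hab with
  | rel a b hr => exact h _ _ hr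
  | refl a => exact Relation.EqvGen.refl _
  | symm a b _ ih => exact ih.symm _ _
  | trans a b c _ _ ih1 ih2 => exact ih1.trans _ _ _ ih2

/-- From a nontrivial `EqvGen` chain, extract a first step. -/
lemma eqvGen_exists_rel {α : Type*} {r : α → α → Prop} {a b : α}
    (h : Relation.EqvGen r a b) (hne : a ≠ b) : ∃ c, r a c ∨ r c a := by
  have key : ∀ {x y : α}, Relation.EqvGen r x y →
      (x = y ∨ ((∃ c, r x c ∨ r c x) ∧ (∃ c, r y c ∨ r c y))) := by
    intro x y hxy
    induction hxy with
    | rel x y hr => exact Or.inr ⟨⟨y, Or.inl hr⟩, ⟨x, Or.inr hr⟩⟩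
    | refl x => exact Or.inl rfl
    | symm x y _ ih => exact ih.imp Eq.symm And.symm
    | trans x y z _ _ ih1 ih2 =>
        rcases ih1 with rfl | ⟨h1, h2⟩
        · exact ih2
        · rcases ih2 with rfl | ⟨h3, h4⟩
          · exact Or.inr ⟨h1, h2⟩
          · exact Or.inr ⟨h1, h4⟩
  rcases key h with rfl | ⟨h1, _⟩
  · exact absurd rfl hne
  · exact h1

/-- If `a` only relates to itself, `EqvGen` reaches only `a`. -/
lemma eqvGen_isolated {α : Type*} {r : α → α → Prop} {a : α}
    (ha : ∀ u, r a u → u = a) (ha' : ∀ u, r u a → u = a) {b : α}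
    (h : Relation.EqvGen r a b) : b = a := by
  have key : ∀ {x y : α}, Relation.EqvGen r x y → (x = a → y = a) ∧ (y = a → x = a) := by
    intro x y hxy
    induction hxy with
    | rel x y hr =>
        constructor
        · rintro rfl; exact ha _ hr
        · rintro rfl; exact ha' _ hr
    | refl x => exact ⟨id, id⟩
    | symm x y _ ih => exact ih.symm
    | trans x y z _ _ ih1 ih2 => exact ⟨fun h => ih2.1 (ih1.1 h), fun h => ih1.2 (ih2.2 h)⟩
  exact (key h).1 rfl

/-- Rectangular determinant expansion: `det (M * N)` as a sum over functions. -/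
lemma det_mul_rect {W E R : Type*} [Fintype W] [DecidableEq W] [Fintype E] [CommRing R]
    (M : Matrix W E R) (N : Matrix E W R) :
    (M * N).det = ∑ p : W → E, (Matrix.det fun i j => M i (p j)) * ∏ i, N (p i) i := by
  simp only [det_apply', mul_apply, Finset.prod_univ_sum, Finset.mul_sum,
    Fintype.piFinset_univ]
  rw [Finset.sum_comm]
  refine Finset.sum_congr rfl fun p _ => ?_
  erw [det_apply', Finset.sum_mul]
  refine Finset.sum_congr rfl fun σ _ => ?_
  rw [Finset.prod_mul_distrib, mul_assoc]

/-- det of a matrix over `Unit ⊕ κ` whose lower-left block vanishes. -/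
lemma det_sum_unit {κ R : Type*} [DecidableEq κ] [Fintype κ] [CommRing R]
    (M : Matrix (Unit ⊕ κ) (Unit ⊕ κ) R)
    (h : ∀ k, M (Sum.inr k) (Sum.inl ()) = 0) :
    M.det = M (Sum.inl ()) (Sum.inl ()) * (M.submatrix Sum.inr Sum.inr).det := by
  rw [← Matrix.fromBlocks_toBlocks M]
  have hz : M.toBlocks₂₁ = 0 := by
    ext k u; exact h k
  rw [hz, Matrix.det_fromBlocks_zero₂₁]
  congr 1
  · rw [Matrix.det_unique]
    rfl

universe u1 u2

/-- Key lemma: the reduced incidence matrix of a spanning tree has determinant `±1`.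
Vertices are `Option W` with root `none`; `b` matches non-root vertices to edges. -/
lemma tree_det {R : Type*} [CommRing R] :
    ∀ (n : ℕ) {W : Type u1} {S : Type u2} [Fintype W] [DecidableEq W] [Fintype S]
    (s t : S → Option W) (b : W ≃ S),
    Fintype.card W = n →
    (∀ u v : Option W, Relation.EqvGen
      (fun a c => ∃ e : S, (s e = a ∧ t e = c) ∨ (s e = c ∧ t e = a)) u v) →
    ((Matrix.of fun (w x : W) =>
        ((if t (b w) = some x then (1:R) else 0) - (if s (b w) = some x then 1 else 0))).det = 1 ∨
     (Matrix.of fun (w x : W) =>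
        ((if t (b w) = some x then (1:R) else 0) - (if s (b w) = some x then 1 else 0))).det = -1) := by
  intro n
  induction n with
  | zero =>
      intro W S _ _ _ s t b hcard hconn
      haveI : IsEmpty W := Fintype.card_eq_zero_iff.mp hcard
      left
      exact Matrix.det_isEmpty
  | succ n IH =>
      intro W S _ _ _ s t b hcard hconn
      classical
      set Adj : Option W → Option W → Prop :=
        fun a c => ∃ e : S, (s e = a ∧ t e = c) ∨ (s e = c ∧ t e = a) with hAdj
      -- every non-root vertex has degree ≥ 1
      have hdeg1 : ∀ w : W, 1 ≤ (Finset.univ.filter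
          (fun e : S => s e = some w ∨ t e = some w)).card := by
        intro w
        obtain ⟨c, hc⟩ := eqvGen_exists_rel (hconn (some w) none) (by simp)
        have : ∃ e : S, s e = some w ∨ t e = some w := by
          rcases hc with ⟨e, he⟩ | ⟨e, he⟩ <;>
            rcases he with ⟨h1, h2⟩ | ⟨h1, h2⟩ <;> exact ⟨e, by tauto⟩
        obtain ⟨e, he⟩ := this
        exact Finset.card_pos.mpr ⟨e, by simp [he]⟩
      -- some edge touches the root
      haveI hWne : Nonempty W := Fintype.card_pos_iff.mp (by omega)
      obtain ⟨w₁⟩ := hWne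
      have hroot : ∃ e₀ : S, s e₀ = none ∨ t e₀ = none := by
        obtain ⟨c, hc⟩ := eqvGen_exists_rel (hconn none (some w₁)) (by simp)
        rcases hc with ⟨e, he⟩ | ⟨e, he⟩ <;>
          rcases he with ⟨h1, h2⟩ | ⟨h1, h2⟩ <;> exact ⟨e, by tauto⟩
      obtain ⟨e₀, he₀⟩ := hroot
      have hcardS : Fintype.card S = n + 1 := by
        rw [← Fintype.card_congr b, hcard]
      -- vertex-count of each edge
      have hcount : ∀ e : S, (Finset.univ.filter
          (fun x : W => s e = some x ∨ t e = some x)).card ≤ 2 := by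
        intro e
        have hsub : (Finset.univ.filter (fun x : W => s e = some x ∨ t e = some x)) ⊆
            (s e).toFinset ∪ (t e).toFinset := by
          intro x hx
          simp only [Finset.mem_filter] at hx
          rcases hx.2 with h | h <;> simp [Finset.mem_union, Option.mem_toFinset, h]
        calc _ ≤ ((s e).toFinset ∪ (t e).toFinset).card := Finset.card_le_card hsub
          _ ≤ (s e).toFinset.card + (t e).toFinset.card := Finset.card_union_le _ _
          _ ≤ 2 := by
            have h1 : (s e).toFinset.card ≤ 1 := by cases (s e) <;> simp
            have h2 : (t e).toFinset.card ≤ 1 := by cases (t e) <;> simp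
            omega
      have hcount0 : (Finset.univ.filter
          (fun x : W => s e₀ = some x ∨ t e₀ = some x)).card ≤ 1 := by
        rcases he₀ with h0 | h0
        · have hsub : (Finset.univ.filter (fun x : W => s e₀ = some x ∨ t e₀ = some x)) ⊆
              (t e₀).toFinset := by
            intro x hx
            simp only [Finset.mem_filter, h0] at hx
            rcases hx.2 with h | h
            · simp at h
            · simp [Option.mem_toFinset, h]
          calc _ ≤ (t e₀).toFinset.card := Finset.card_le_card hsub
            _ ≤ 1 := by cases (t e₀) <;> simp
        · have hsub : (Finset.univ.filter (fun x : W => s e₀ = some x ∨ t e₀ = some x)) ⊆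
              (s e₀).toFinset := by
            intro x hx
            simp only [Finset.mem_filter, h0] at hx
            rcases hx.2 with h | h
            · simp [Option.mem_toFinset, h]
            · simp at h
          calc _ ≤ (s e₀).toFinset.card := Finset.card_le_card hsub
            _ ≤ 1 := by cases (s e₀) <;> simp
      -- double counting
      have hdouble : ∑ w : W, (Finset.univ.filter
            (fun e : S => s e = some w ∨ t e = some w)).card =
          ∑ e : S, (Finset.univ.filter (fun x : W => s e = some x ∨ t e = some x)).card := by
        simp only [Finset.card_filter]
        rw [Finset.sum_comm]
      -- a leaf exists
      have hleaf : ∃ w : W, (Finset.univ.filter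
          (fun e : S => s e = some w ∨ t e = some w)).card = 1 := by
        by_contra hno
        push_neg at hno
        have h2le : ∀ w : W, 2 ≤ (Finset.univ.filter
            (fun e : S => s e = some w ∨ t e = some w)).card := by
          intro w; have := hdeg1 w; have := hno w; omega
        have hlow : 2 * (n + 1) ≤ ∑ w : W, (Finset.univ.filter
            (fun e : S => s e = some w ∨ t e = some w)).card := by
          calc 2 * (n + 1) = ∑ _w : W, 2 := by
                rw [Finset.sum_const, Finset.card_univ, hcard]; ring
            _ ≤ _ := Finset.sum_le_sum fun w _ => h2le w
        have hhigh : ∑ e : S, (Finset.univ.filter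
            (fun x : W => s e = some x ∨ t e = some x)).card ≤ 2 * n + 1 := by
          have herase : ∑ e ∈ Finset.univ.erase e₀,
              (Finset.univ.filter (fun x : W => s e = some x ∨ t e = some x)).card ≤ 2 * n := by
            calc _ ≤ ∑ _e ∈ Finset.univ.erase e₀, 2 :=
                  Finset.sum_le_sum fun e _ => hcount e
              _ = 2 * n := by
                rw [Finset.sum_const, Finset.card_erase_of_mem (Finset.mem_univ _),
                  Finset.card_univ, hcardS]
                simp [Nat.mul_comm]
          have hsplit : (Finset.univ.filter (fun x : W => s e₀ = some x ∨ t e₀ = some x)).card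
              + ∑ e ∈ Finset.univ.erase e₀,
                (Finset.univ.filter (fun x : W => s e = some x ∨ t e = some x)).card
              = ∑ e : S, (Finset.univ.filter (fun x : W => s e = some x ∨ t e = some x)).card :=
            Finset.add_sum_erase Finset.univ
              (fun e : S => (Finset.univ.filter (fun x : W => s e = some x ∨ t e = some x)).card)
              (Finset.mem_univ e₀)
          omega
        rw [hdouble] at hlow
        omega
      obtain ⟨w, hw⟩ := hleaf
      obtain ⟨f, hf⟩ := Finset.card_eq_one.mp hw
      have htouchf : s f = some w ∨ t f = some w := by
        have : f ∈ Finset.univ.filter (fun e : S => s e = some w ∨ t e = some w) := by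
          rw [hf]; exact Finset.mem_singleton_self f
        simpa using this
      have huniq : ∀ e : S, (s e = some w ∨ t e = some w) → e = f := by
        intro e he
        have : e ∈ Finset.univ.filter (fun e : S => s e = some w ∨ t e = some w) := by simpa using he
        rw [hf] at this; simpa using this
      -- the leaf edge is not a loop
      have hnoloop : ¬(s f = some w ∧ t f = some w) := by
        rintro ⟨hs, ht⟩
        have hiso1 : ∀ u, Adj (some w) u → u = some w := by
          rintro u ⟨e, he⟩
          have hef : e = f := huniq e (by tauto)
          subst hef
          rcases he with ⟨h1, h2⟩ | ⟨h1, h2⟩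
          · rw [← h2]; exact ht
          · rw [← h1]; exact hs
        have hiso2 : ∀ u, Adj u (some w) → u = some w := by
          rintro u ⟨e, he⟩
          have hef : e = f := huniq e (by tauto)
          subst hef
          rcases he with ⟨h1, h2⟩ | ⟨h1, h2⟩
          · rw [← h1]; exact hs
          · rw [← h2]; exact ht
        exact absurd (eqvGen_isolated hiso1 hiso2 (hconn (some w) none)) (by simp)
      -- the other endpoint
      obtain ⟨z, hz, hfz⟩ : ∃ z : Option W, z ≠ some w ∧
          ((s f = some w ∧ t f = z) ∨ (s f = z ∧ t f = some w)) := by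
        by_cases hs : s f = some w
        · exact ⟨t f, fun h => hnoloop ⟨hs, h⟩, Or.inl ⟨hs, rfl⟩⟩
        · exact ⟨s f, hs, Or.inr ⟨rfl, htouchf.resolve_left hs⟩⟩
      have htouch_ne : ∀ e : S, e ≠ f → s e ≠ some w ∧ t e ≠ some w := by
        intro e he
        constructor <;> intro h <;> exact he (huniq e (by tauto))
      -- the contracted graph
      set π₀ : Option W → Option {x : W // x ≠ w} :=
        fun o => o.bind fun x => if h : x = w then none else some ⟨x, h⟩ with hπ₀
      set π : Option W → Option {x : W // x ≠ w} :=
        fun o => if o = some w then π₀ z else π₀ o with hπdef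
      have hπ_ne : ∀ o : Option W, o ≠ some w → π o = π₀ o := fun o ho => if_neg ho
      have hπ₀_some : ∀ (o : Option W) (y : {x : W // x ≠ w}),
          o ≠ some w → (π₀ o = some y ↔ o = some y.val) := by
        rintro o ⟨y, hy⟩ ho
        cases o with
        | none => simp [hπ₀]
        | some u =>
            have hu : u ≠ w := fun h => ho (by rw [h])
            simp [hπ₀, hu, Subtype.ext_iff]
      set s' : {e : S // e ≠ f} → Option {x : W // x ≠ w} := fun e => π (s e.val) with hs'
      set t' : {e : S // e ≠ f} → Option {x : W // x ≠ w} := fun e => π (t e.val) with ht'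
      set b₂ : W ≃ S := (Equiv.swap w (b.symm f)).trans b with hb₂def
      have hb₂w : b₂ w = f := by simp [hb₂def, Equiv.swap_apply_left]
      have hb₂ne : ∀ x : W, x ≠ w → b₂ x ≠ f := by
        intro x hx h
        exact hx (b₂.injective (h.trans hb₂w.symm))
      set b' : {x : W // x ≠ w} ≃ {e : S // e ≠ f} :=
        Equiv.subtypeEquiv b₂ (fun x => by
          constructor
          · intro hx h; exact hx (b₂.injective (h.trans hb₂w.symm))
          · intro h hx; exact h (hx ▸ hb₂w)) with hb'def
      have hb'val : ∀ x : {x : W // x ≠ w}, (b' x).val = b₂ x.val := fun x => rfl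
      have hcard' : Fintype.card {x : W // x ≠ w} = n := by
        have h1 : Fintype.card {x : W // x = w} = 1 := Fintype.card_subtype_eq w
        have h2 : Fintype.card {x : W // ¬ x = w} = Fintype.card W - Fintype.card {x : W // x = w} :=
          Fintype.card_subtype_compl _
        rw [h1, hcard] at h2
        simpa using h2
      -- connectivity of the contracted graph
      have hπz : π (some w) = π z := by
        rw [hπ_ne z hz]
        simp [hπdef]
      have hconn' : ∀ u v : Option {x : W // x ≠ w}, Relation.EqvGen
          (fun a c => ∃ e : {e : S // e ≠ f}, (s' e = a ∧ t' e = c) ∨ (s' e = c ∧ t' e = a)) u v := by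
        have hstep : ∀ a c : Option W, Adj a c → Relation.EqvGen
            (fun a c => ∃ e : {e : S // e ≠ f}, (s' e = a ∧ t' e = c) ∨ (s' e = c ∧ t' e = a))
            (π a) (π c) := by
          rintro a c ⟨e, he⟩
          by_cases hef : e = f
          · subst hef
            have : π a = π c := by
              rcases he with ⟨h1, h2⟩ | ⟨h1, h2⟩ <;> rcases hfz with ⟨h3, h4⟩ | ⟨h3, h4⟩ <;>
                rw [← h1, ← h2] <;> rw [h3, h4] <;> first | rfl | exact hπz | exact hπz.symm
            rw [this]
            exact Relation.EqvGen.refl _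
          · refine Relation.EqvGen.rel _ _ ⟨⟨e, hef⟩, ?_⟩
            rcases he with ⟨h1, h2⟩ | ⟨h1, h2⟩
            · exact Or.inl ⟨congrArg π h1, congrArg π h2⟩
            · exact Or.inr ⟨congrArg π h1, congrArg π h2⟩
        intro u v
        set sec : Option {x : W // x ≠ w} → Option W := Option.map Subtype.val with hsec
        have hπsec : ∀ u', π (sec u') = u' := by
          rintro (_ | ⟨⟨x, hx⟩⟩)
          · simp [hsec, hπdef, hπ₀]
          · have : (some x : Option W) ≠ some w := by simpa using hx
            rw [hsec]
            simp only [Option.map_some]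
            rw [hπ_ne _ this, hπ₀]
            simp [hx]
        have := eqvGen_map π hstep (hconn (sec u) (sec v))
        rwa [hπsec, hπsec] at this
      have hIH : (Matrix.of fun (w' x' : {x : W // x ≠ w}) =>
            ((if t' (b' w') = some x' then (1:R) else 0) -
              (if s' (b' w') = some x' then 1 else 0))).det = 1 ∨
          (Matrix.of fun (w' x' : {x : W // x ≠ w}) =>
            ((if t' (b' w') = some x' then (1:R) else 0) -
              (if s' (b' w') = some x' then 1 else 0))).det = -1 := by
        exact IH s' t' b' hcard' hconn'
      -- determinant bookkeeping
      set entry : S → W → R :=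
        fun e x => (if t e = some x then (1:R) else 0) - (if s e = some x then 1 else 0) with hentry
      have hentry0 : ∀ e : S, e ≠ f → entry e w = 0 := by
        intro e he
        obtain ⟨h1, h2⟩ := htouch_ne e he
        simp [hentry, h1, h2]
      set X : Matrix W W R := Matrix.of fun (w₁ x : W) => entry (b w₁) x with hX
      set Z : Matrix W W R := Matrix.of fun (w₁ x : W) => entry (b₂ w₁) x with hZ
      have hgoal : X.det = 1 ∨ X.det = -1 := by
        have hZdet : Z.det = 1 ∨ Z.det = -1 := by
          -- reindex over `Unit ⊕ W'`
          set q : Unit ⊕ {x : W // x ≠ w} ≃ W :=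
            { toFun := fun o => Sum.elim (fun _ => w) Subtype.val o
              invFun := fun x => if h : x = w then Sum.inl () else Sum.inr ⟨x, h⟩
              left_inv := by
                rintro (⟨⟩ | ⟨x, hx⟩)
                · simp
                · simp [hx]
              right_inv := by
                intro x
                by_cases h : x = w
                · subst h; simp
                · simp [h] } with hq
          set M : Matrix (Unit ⊕ {x : W // x ≠ w}) (Unit ⊕ {x : W // x ≠ w}) R :=
            Z.submatrix q q with hM
          have hdetq : M.det = Z.det := Matrix.det_submatrix_equiv_self q Z
          have h0 : ∀ k : {x : W // x ≠ w}, M (Sum.inr k) (Sum.inl ()) = 0 := by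
            intro k
            have : M (Sum.inr k) (Sum.inl ()) = entry (b₂ k.val) w := rfl
            rw [this]
            exact hentry0 _ (hb₂ne _ k.property)
          have hexp := det_sum_unit M h0
          have hMll : M (Sum.inl ()) (Sum.inl ()) = entry f w := by
            have : M (Sum.inl ()) (Sum.inl ()) = entry (b₂ w) w := rfl
            rw [this, hb₂w]
          have hval : entry f w = 1 ∨ entry f w = -1 := by
            rcases hfz with ⟨h1, h2⟩ | ⟨h1, h2⟩
            · right
              have hne : t f ≠ some w := by rw [h2]; exact hz
              simp [hentry, h1, hne]
            · left
              have hne : s f ≠ some w := by rw [h1]; exact hz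
              simp [hentry, h1, h2, hz]
          have hsub : M.submatrix Sum.inr Sum.inr = Matrix.of fun (w' x' : {x : W // x ≠ w}) =>
              ((if t' (b' w') = some x' then (1:R) else 0) -
                (if s' (b' w') = some x' then 1 else 0)) := by
            ext x' y'
            have hMv : M.submatrix Sum.inr Sum.inr x' y' = entry (b₂ x'.val) y'.val := rfl
            rw [hMv]
            have hne := htouch_ne (b₂ x'.val) (hb₂ne _ x'.property)
            have hiff_t : t' (b' x') = some y' ↔ t (b₂ x'.val) = some y'.val := by
              show π (t (b' x').val) = some y' ↔ _
              rw [hb'val x', hπ_ne _ hne.2]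
              exact hπ₀_some _ _ hne.2
            have hiff_s : s' (b' x') = some y' ↔ s (b₂ x'.val) = some y'.val := by
              show π (s (b' x').val) = some y' ↔ _
              rw [hb'val x', hπ_ne _ hne.1]
              exact hπ₀_some _ _ hne.1
            simp only [hentry, Matrix.of_apply]
            rw [if_congr hiff_t rfl rfl, if_congr hiff_s rfl rfl]
          rw [hexp, hMll, hsub] at hdetq
          rw [← hdetq]
          rcases hval with h | h <;> rcases hIH with h' | h' <;> rw [h, h'] <;> simp
        -- transfer from `Z` to `X` via the swap
        have hZX : Z = X.submatrix (Equiv.swap w (b.symm f)) id := by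
          ext w₁ x
          simp [hZ, hX, hb₂def, Matrix.submatrix_apply]
        have hperm : Z.det = (Equiv.Perm.sign (Equiv.swap w (b.symm f)) : ℤ) * X.det := by
          rw [hZX, Matrix.det_permute]
        rcases Int.units_eq_one_or (Equiv.Perm.sign (Equiv.swap w (b.symm f))) with hs1 | hs1 <;>
          rw [hs1] at hperm <;> push_cast at hperm <;>
          rcases hZdet with h | h <;> rw [h] at hperm
        · left; linear_combination -hperm
        · right; linear_combination -hperm
        · right; linear_combination hperm
        · left; linear_combination hperm
      exact hgoal


lemma sum_subtype_single {V F : Type*} [Fintype V] [DecidableEq V] [CommRing F]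
    (v₀ v : V) (x : {u : V // u ≠ v₀} → F) :
    (∑ y : {u : V // u ≠ v₀}, (if v = ↑y then (1:F) else 0) * x y) =
      if h : v = v₀ then 0 else x ⟨v, h⟩ := by
  by_cases h : v = v₀
  · rw [dif_pos h]
    apply Finset.sum_eq_zero
    intro y _
    rw [if_neg, zero_mul]
    intro hv
    exact y.property (by rw [← hv, h])
  · rw [dif_neg h, Finset.sum_eq_single (⟨v, h⟩ : {u : V // u ≠ v₀})]
    · simp
    · intro y _ hy
      rw [if_neg, zero_mul]
      intro hv
      exact hy (Subtype.ext hv.symm)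
    · intro habs
      exact absurd (Finset.mem_univ _) habs

open DirGraph in
/-- If `(V, T)` is disconnected, the square reduced incidence submatrix is singular. -/
lemma disconnected_det_zero {V E F : Type*} [Fintype V] [Fintype E] [DecidableEq V]
    [DecidableEq E] [Field F] (G : DirGraph V E) (v₀ : V) (T : Finset E)
    (g : {v : V // v ≠ v₀} ≃ {e : E // e ∈ T})
    (hnc : ¬ ∀ u v : V, Relation.EqvGen (G.Adj ↑T) u v) :
    (Matrix.of fun (w x : {v : V // v ≠ v₀}) => G.redInc F v₀ (g w).val x).det = 0 := by
  classical
  push_neg at hnc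
  obtain ⟨u, v, huv⟩ := hnc
  -- a vertex not connected to v₀
  obtain ⟨c, hc⟩ : ∃ c : V, ¬ Relation.EqvGen (G.Adj ↑T) v₀ c := by
    by_contra hcon
    push_neg at hcon
    exact huv (((hcon u).symm _ _).trans _ _ _ (hcon v))
  have hcne : c ≠ v₀ := by
    rintro rfl
    exact hc (Relation.EqvGen.refl _)
  rw [← Matrix.exists_mulVec_eq_zero_iff]
  refine ⟨fun y => if Relation.EqvGen (G.Adj ↑T) ↑y c then 1 else 0, ?_, ?_⟩
  · intro h0
    have := congrFun h0 ⟨c, hcne⟩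
    simp only [Relation.EqvGen.refl, if_pos] at this
    exact one_ne_zero this
  · funext w
    set χ : V → F := fun v => if h : v = v₀ then 0 else
      (if Relation.EqvGen (G.Adj ↑T) v c then 1 else 0) with hχ
    have hχ_eq : ∀ v : V, χ v = if Relation.EqvGen (G.Adj ↑T) v c then 1 else 0 := by
      intro v
      by_cases h : v = v₀
      · subst h
        rw [hχ]
        simp only [dif_pos]
        rw [if_neg hc]
      · rw [hχ]; simp only [dif_neg h]
    have hmv : (Matrix.of fun (w x : {v : V // v ≠ v₀}) =>
        G.redInc F v₀ (g w).val x).mulVec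
          (fun y => if Relation.EqvGen (G.Adj ↑T) ↑y c then 1 else 0) w =
        χ (G.tgt (g w).val) - χ (G.src (g w).val) := by
      simp only [Matrix.mulVec, dotProduct, Matrix.of_apply, DirGraph.redInc, DirGraph.inc,
        sub_mul]
      rw [Finset.sum_sub_distrib]
      rw [sum_subtype_single v₀ (G.tgt (g w).val) _, sum_subtype_single v₀ (G.src (g w).val) _]
    rw [hmv]
    have hadj : Relation.EqvGen (G.Adj ↑T) (G.src (g w).val) (G.tgt (g w).val) :=
      Relation.EqvGen.rel _ _ ⟨(g w).val, (g w).property, Or.inl ⟨rfl, rfl⟩⟩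
    rw [hχ_eq, hχ_eq]
    by_cases hsc : Relation.EqvGen (G.Adj ↑T) (G.src (g w).val) c
    · rw [if_pos hsc, if_pos ((hadj.symm _ _).trans _ _ _ hsc), sub_self]
      rfl
    · rw [if_neg hsc, if_neg (fun h => hsc (hadj.trans _ _ _ h)), sub_self]
      rfl

open DirGraph in
/-- If `(V, T)` is connected and `g` matches non-root vertices with edges of `T`,
the square reduced incidence submatrix has determinant `±1`. -/
lemma connected_det_pm_one {V E F : Type*} [Fintype V] [Fintype E] [DecidableEq V]
    [DecidableEq E] [Field F] (G : DirGraph V E) (v₀ : V) (T : Finset E)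
    (g : {v : V // v ≠ v₀} ≃ {e : E // e ∈ T})
    (hc : ∀ u v : V, Relation.EqvGen (G.Adj ↑T) u v) :
    (Matrix.of fun (w x : {v : V // v ≠ v₀}) => G.redInc F v₀ (g w).val x).det = 1 ∨
    (Matrix.of fun (w x : {v : V // v ≠ v₀}) => G.redInc F v₀ (g w).val x).det = -1 := by
  classical
  set ι : V → Option {v : V // v ≠ v₀} := fun v => if h : v = v₀ then none else some ⟨v, h⟩ with hι
  have hι_some : ∀ (v : V) (x : {v : V // v ≠ v₀}), ι v = some x ↔ v = ↑x := by
    intro v x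
    by_cases h : v = v₀
    · subst h
      simp only [hι, dif_pos]
      constructor
      · intro h'; exact absurd h' (by simp)
      · intro h'; exact absurd h'.symm x.property
    · simp only [hι, dif_neg h, Option.some_inj]
      exact Subtype.ext_iff
  set s : {e : E // e ∈ T} → Option {v : V // v ≠ v₀} := fun e => ι (G.src e.val) with hs
  set t : {e : E // e ∈ T} → Option {v : V // v ≠ v₀} := fun e => ι (G.tgt e.val) with ht
  have hconn' : ∀ u v : Option {v : V // v ≠ v₀}, Relation.EqvGen
      (fun a c => ∃ e : {e : E // e ∈ T}, (s e = a ∧ t e = c) ∨ (s e = c ∧ t e = a)) u v := by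
    have hstep : ∀ a c : V, G.Adj ↑T a c → Relation.EqvGen
        (fun a c => ∃ e : {e : E // e ∈ T}, (s e = a ∧ t e = c) ∨ (s e = c ∧ t e = a))
        (ι a) (ι c) := by
      rintro a c ⟨e, he, hor⟩
      refine Relation.EqvGen.rel _ _ ⟨⟨e, he⟩, ?_⟩
      rcases hor with ⟨h1, h2⟩ | ⟨h1, h2⟩
      · exact Or.inl ⟨congrArg ι h1, congrArg ι h2⟩
      · exact Or.inr ⟨congrArg ι h1, congrArg ι h2⟩
    intro u v
    set sec : Option {v : V // v ≠ v₀} → V := fun o => o.elim v₀ Subtype.val with hsec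
    have hιsec : ∀ u, ι (sec u) = u := by
      rintro (_ | ⟨⟨x, hx⟩⟩)
      · simp [hsec, hι]
      · exact (hι_some _ _).mpr rfl
    have := eqvGen_map ι hstep (hc (sec u) (sec v))
    rwa [hιsec, hιsec] at this
  have htree := tree_det (R := F) (Fintype.card {v : V // v ≠ v₀}) s t g rfl hconn'
  have hmat : (Matrix.of fun (w x : {v : V // v ≠ v₀}) =>
      ((if t (g w) = some x then (1:F) else 0) - (if s (g w) = some x then 1 else 0))) =
      (Matrix.of fun (w x : {v : V // v ≠ v₀}) => G.redInc F v₀ (g w).val x) := by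
    ext w x
    simp only [Matrix.of_apply, DirGraph.redInc, DirGraph.inc]
    congr 1
    · exact if_congr (hι_some (G.tgt (g w).val) x) rfl rfl
    · exact if_congr (hι_some (G.src (g w).val) x) rfl rfl
  rwa [hmat] at htree

end MatrixTreeAux

open DirGraph in
/-- Matrix-Tree theorem: for a connected finite graph `G` with root `v₀` and nonzero
edge variables `α_e` in a field, the Kirchhoff polynomial equals
`(∏_e α_e) · det(I'ᵀ A⁻¹ I')` with `I'` the reduced incidence matrix and
`A = diag(α_e)`. -/
theorem kirchhoff_eq_det_weighted_laplacian
    {V E F : Type*} [Fintype V] [Fintype E] [DecidableEq V] [DecidableEq E] [Field F]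
    (G : DirGraph V E) (v₀ : V) (α : E → F)
    (hconn : ∀ u v : V, Relation.EqvGen (G.Adj Set.univ) u v)
    (hα : ∀ e, α e ≠ 0) :
    G.kirchhoff α =
      (∏ e, α e) *
        Matrix.det ((G.redInc F v₀).transpose * Matrix.diagonal (fun e => (α e)⁻¹) *
          G.redInc F v₀) := by
  classical
  have hcardV : Fintype.card V = Fintype.card {v : V // v ≠ v₀} + 1 := by
    have h2 : Fintype.card {v : V // v ≠ v₀} =
        Fintype.card V - Fintype.card {v : V // v = v₀} := Fintype.card_subtype_compl _
    rw [Fintype.card_subtype_eq v₀] at h2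
    have h3 : 0 < Fintype.card V := Fintype.card_pos_iff.mpr ⟨v₀⟩
    omega
  set B : Matrix E {v : V // v ≠ v₀} F := G.redInc F v₀ with hB
  set D : Matrix E E F := Matrix.diagonal (fun e => (α e)⁻¹) with hD
  set Φ : ({v : V // v ≠ v₀} → E) → F := fun p =>
    (∏ j, (α (p j))⁻¹) * ((Matrix.of fun i j => B (p i) j).det * ∏ i, B (p i) i) with hΦ
  have hMentry : ∀ (i : {v : V // v ≠ v₀}) (e : E),
      (B.transpose * D) i e = (α e)⁻¹ * B e i := by
    intro i e
    rw [hD, Matrix.mul_diagonal, Matrix.transpose_apply, mul_comm]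
  have hdet1 : (B.transpose * D * B).det = ∑ p : {v : V // v ≠ v₀} → E, Φ p := by
    rw [det_mul_rect (B.transpose * D) B]
    refine Finset.sum_congr rfl fun p _ => ?_
    have h1 : (fun i j => (B.transpose * D) i (p j)) =
        Matrix.of (fun i j => (α (p j))⁻¹ *
          (Matrix.of fun i j => B (p i) j).transpose i j) := by
      funext i j
      rw [hMentry]
      rfl
    rw [h1, Matrix.det_mul_row, Matrix.det_transpose, hΦ, mul_assoc]
  rw [hdet1, ← Finset.sum_fiberwise Finset.univ
    (fun p : {v : V // v ≠ v₀} → E => Finset.univ.image p) Φ, Finset.mul_sum]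
  show G.kirchhoff α = _
  rw [DirGraph.kirchhoff]
  refine Finset.sum_congr rfl fun T _ => ?_
  by_cases hcardT : T.card = Fintype.card {v : V // v ≠ v₀}
  · -- |T| = |V| - 1 : the fiber consists of the bijections onto T
    have hcard2 : Fintype.card {e : E // e ∈ T} = Fintype.card {v : V // v ≠ v₀} := by
      rw [Fintype.card_coe]; exact hcardT
    have hbij : ∑ p ∈ Finset.univ.filter
          (fun p : {v : V // v ≠ v₀} → E => Finset.univ.image p = T), Φ p
        = ∑ g' : {v : V // v ≠ v₀} ≃ {e : E // e ∈ T}, Φ (fun w => ↑(g' w)) := by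
      have hmemT : ∀ (p : {v : V // v ≠ v₀} → E), p ∈ Finset.univ.filter
          (fun p : {v : V // v ≠ v₀} → E => Finset.univ.image p = T) → ∀ w, p w ∈ T := by
        intro p hp w
        simp only [Finset.mem_filter] at hp
        rw [← hp.2]
        exact Finset.mem_image_of_mem p (Finset.mem_univ w)
      have hinj : ∀ (p : {v : V // v ≠ v₀} → E), p ∈ Finset.univ.filter
          (fun p : {v : V // v ≠ v₀} → E => Finset.univ.image p = T) →
          Function.Injective p := by
        intro p hp
        simp only [Finset.mem_filter] at hp
        have hcard3 : (Finset.univ.image p).card =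
            (Finset.univ : Finset {v : V // v ≠ v₀}).card := by
          rw [hp.2, Finset.card_univ, hcardT]
        have hinjon := Finset.card_image_iff.mp hcard3
        intro a b hab
        exact hinjon (Finset.mem_coe.mpr (Finset.mem_univ a))
          (Finset.mem_coe.mpr (Finset.mem_univ b)) hab
      let toEq : ∀ (p : {v : V // v ≠ v₀} → E), p ∈ Finset.univ.filter
          (fun p : {v : V // v ≠ v₀} → E => Finset.univ.image p = T) →
          ({v : V // v ≠ v₀} ≃ {e : E // e ∈ T}) := fun p hp =>
        Equiv.ofBijective (fun w => (⟨p w, hmemT p hp w⟩ : {e : E // e ∈ T}))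
          ((Fintype.bijective_iff_injective_and_card _).mpr
            ⟨fun a b hab => hinj p hp (congrArg Subtype.val hab), by rw [hcard2]⟩)
      refine Finset.sum_bij' (i := toEq)
        (j := fun g' _ => fun w => ↑(g' w)) ?_ ?_ ?_ ?_ ?_
      · intro p hp; exact Finset.mem_univ _
      · intro g' _
        simp only [Finset.mem_filter]
        refine ⟨Finset.mem_univ _, ?_⟩
        ext e
        simp only [Finset.mem_image]
        constructor
        · rintro ⟨w, _, rfl⟩; exact (g' w).property
        · intro he; exact ⟨g'.symm ⟨e, he⟩, Finset.mem_univ _, by simp⟩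
      · intro p hp; funext w; rfl
      · intro g' hg
        apply Equiv.ext
        intro w
        apply Subtype.ext
        rfl
      · intro p hp; rfl
    rw [hbij]
    set g₀ : {v : V // v ≠ v₀} ≃ {e : E // e ∈ T} := Fintype.equivOfCardEq hcard2.symm with hg₀
    set Y : Matrix {v : V // v ≠ v₀} {v : V // v ≠ v₀} F :=
      Matrix.of fun i j => B ((g₀ i) : E) j with hY
    have hΦg : ∀ g' : {v : V // v ≠ v₀} ≃ {e : E // e ∈ T}, Φ (fun w => ↑(g' w)) =
        (∏ e ∈ T, (α e)⁻¹) *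
          ((Matrix.of fun i j => B (↑(g' i)) j).det * ∏ i, B (↑(g' i)) i) := by
      intro g'
      rw [hΦ]
      show (∏ j, (α ↑(g' j))⁻¹) *
          ((Matrix.of fun i j => B (↑(g' i)) j).det * ∏ i, B (↑(g' i)) i) = _
      congr 1
      calc ∏ j, (α ↑(g' j))⁻¹ = ∏ e : {e : E // e ∈ T}, (α ↑e)⁻¹ :=
            Equiv.prod_comp g' (fun e : {e : E // e ∈ T} => (α ↑e)⁻¹)
        _ = ∏ e ∈ T, (α e)⁻¹ :=
            (Finset.prod_subtype T (fun x => Iff.rfl) (fun e => (α e)⁻¹)).symm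
    rw [Finset.sum_congr rfl (fun g' _ => hΦg g'), ← Finset.mul_sum]
    have heq : (∑ g' : {v : V // v ≠ v₀} ≃ {e : E // e ∈ T},
        (Matrix.of fun i j => B (↑(g' i)) j).det * ∏ i, B (↑(g' i)) i) = Y.det * Y.det := by
      set eqq : Equiv.Perm {v : V // v ≠ v₀} ≃
          ({v : V // v ≠ v₀} ≃ {e : E // e ∈ T}) :=
        { toFun := fun σ => σ.trans g₀
          invFun := fun g' => g'.trans g₀.symm
          left_inv := fun σ => by ext w; simp
          right_inv := fun g' => by ext w; simp } with heqq
      rw [← Equiv.sum_comp eqq (fun g' => (Matrix.of fun i j => B (↑(g' i)) j).det *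
        ∏ i, B (↑(g' i)) i)]
      calc ∑ σ : Equiv.Perm {v : V // v ≠ v₀},
            (Matrix.of fun i j => B (↑((eqq σ) i)) j).det * ∏ i, B (↑((eqq σ) i)) i
          = ∑ σ : Equiv.Perm {v : V // v ≠ v₀},
            ((Equiv.Perm.sign σ : ℤ) : F) * Y.det * ∏ i, Y (σ i) i := by
            refine Finset.sum_congr rfl fun σ _ => ?_
            have h1 : (Matrix.of fun i j => B (↑((eqq σ) i)) j) = Y.submatrix σ id := by
              ext i j; rfl
            rw [h1, Matrix.det_permute]
            congr 1
        _ = Y.det * ∑ σ : Equiv.Perm {v : V // v ≠ v₀},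
            ((Equiv.Perm.sign σ : ℤ) : F) * ∏ i, Y (σ i) i := by
            rw [Finset.mul_sum]
            refine Finset.sum_congr rfl fun σ _ => by ring
        _ = Y.det * Y.det := by rw [← Matrix.det_apply']
    rw [heq]
    have hYe : Y = Matrix.of fun (w x : {v : V // v ≠ v₀}) =>
        G.redInc F v₀ ((g₀ w) : E) x := rfl
    by_cases hconnT : ∀ u v : V, Relation.EqvGen (G.Adj ↑T) u v
    · have hsp : G.IsSpanningTree T := ⟨hconnT, by omega⟩
      rw [if_pos hsp]
      have hY1 : Y.det * Y.det = 1 := by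
        rcases connected_det_pm_one (F := F) G v₀ T g₀ hconnT with h | h <;>
          rw [hYe, h] <;> norm_num
      rw [hY1, mul_one, Finset.prod_inv_distrib, ← Finset.prod_mul_prod_compl T α]
      have hTne : ∏ e ∈ T, α e ≠ 0 := Finset.prod_ne_zero_iff.mpr fun e _ => hα e
      field_simp
    · have hns : ¬ G.IsSpanningTree T := fun hsp => hconnT hsp.1
      rw [if_neg hns]
      have h0 : Y.det = 0 := by
        rw [hYe]
        exact disconnected_det_zero (F := F) G v₀ T g₀ hconnT
      rw [h0]
      ring
  · -- |T| ≠ |V| - 1 : both sides vanish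
    have hns : ¬ G.IsSpanningTree T := by
      intro hsp
      have := hsp.2
      omega
    rw [if_neg hns]
    have hz : ∀ p ∈ Finset.univ.filter
        (fun p : {v : V // v ≠ v₀} → E => Finset.univ.image p = T), Φ p = 0 := by
      intro p hp
      simp only [Finset.mem_filter] at hp
      have hpni : ¬ Function.Injective p := by
        intro hinj
        apply hcardT
        calc T.card = (Finset.univ.image p).card := by rw [hp.2]
          _ = Finset.univ.card := Finset.card_image_of_injective _ hinj
          _ = _ := Finset.card_univ
      obtain ⟨a, b, hab, hne⟩ := Function.not_injective_iff.mp hpni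
      have hdet0 : (Matrix.of fun i j => B (p i) j).det = 0 :=
        Matrix.det_zero_of_row_eq hne (by funext j; show B (p a) j = B (p b) j; rw [hab])
      rw [hΦ]
      simp only [hdet0, zero_mul, mul_zero]
    rw [Finset.sum_eq_zero hz, mul_zero]
end

section
/- For a finite connected graph G and an edge e that is not a bridge, the diagonal cycle polynomial satisfies χ_G^{e,e} = Σ_{C simple cycle containing e} Ψ_{G/C} = Ψ_{G∖e} = ∂Ψ_G/∂α_e. -/
namespace DirGraph

variable {V E : Type*}

/-- The number of connected components of the subgraph of `G` with all vertices and
edge set `S`. -/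
noncomputable def numComponents (G : DirGraph V E) (S : Set E) : ℕ :=
  Nat.card (Quotient (Relation.EqvGen.setoid (G.Adj S)))

/-- The degree of a vertex in the edge set `S` (loops counted twice). -/
def degOn [DecidableEq V] [Fintype E] (G : DirGraph V E) (S : Finset E) (v : V) : ℕ :=
  ∑ e ∈ S, ((if G.src e = v then 1 else 0) + (if G.tgt e = v then 1 else 0))

/-- `C` is (the edge set of) a simple cycle: nonempty, 2-regular on the vertices it
meets, and connected. -/
def IsSimpleCycle [DecidableEq V] [Fintype E] (G : DirGraph V E) (C : Finset E) : Prop :=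
  C.Nonempty ∧ (∀ v : V, G.degOn C v = 0 ∨ G.degOn C v = 2) ∧
    ∀ e ∈ C, ∀ f ∈ C, Relation.EqvGen (G.Adj ↑C) (G.src e) (G.src f)

/-- `B` is a bond: removing `B` leaves exactly two connected components, and `B` is
minimal with this property. -/
def IsBond [Fintype E] [DecidableEq E] (G : DirGraph V E) (B : Finset E) : Prop :=
  G.numComponents ↑(Bᶜ) = 2 ∧ ∀ B' : Finset E, B' ⊂ B → G.numComponents ↑(B'ᶜ) ≠ 2

open Classical in
/-- The Kirchhoff polynomial of the subgraph `(V, S)`, extended multiplicatively over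
connected components: the sum over maximal spanning forests `F` of `S` of
`∏_{e ∈ S ∖ F} α_e`. -/
noncomputable def kirchhoffOn [Fintype V] [Fintype E] [DecidableEq E]
    {R : Type*} [CommRing R] (G : DirGraph V E) (S : Finset E) (α : E → R) : R :=
  ∑ F : Finset E,
    if F ⊆ S ∧ (∀ u v : V, Relation.EqvGen (G.Adj ↑F) u v ↔ Relation.EqvGen (G.Adj ↑S) u v)
        ∧ F.card + G.numComponents ↑S = Fintype.card V then
      ∏ e ∈ S \ F, α e
    else 0

open Classical in
/-- The Kirchhoff polynomial of the contraction `G/A` of the edge set `A`: the sum over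
edge sets `F ⊆ E∖A` that together with `A` span `G` and become spanning trees of `G/A`,
of `∏_{e ∈ (E∖A)∖F} α_e`. -/
noncomputable def kirchhoffContract [Fintype V] [Fintype E] [DecidableEq E]
    {R : Type*} [CommRing R] (G : DirGraph V E) (A : Finset E) (α : E → R) : R :=
  ∑ F : Finset E,
    if F ⊆ Aᶜ ∧ (∀ u v : V, Relation.EqvGen (G.Adj ↑(F ∪ A)) u v)
        ∧ F.card + 1 = G.numComponents ↑A then
      ∏ e ∈ Aᶜ \ F, α e
    else 0


/-- `e` is a bridge: deleting `e` disconnects `G`. -/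
def IsBridge (G : DirGraph V E) (e : E) : Prop :=
  ¬ ∀ u v : V, Relation.EqvGen (G.Adj {f | f ≠ e}) u v

end DirGraph


namespace DirGraph

open Relation

variable {V E : Type*}

lemma adj_mono {G : DirGraph V E} {S S' : Set E} (h : S ⊆ S') {u v : V}
    (huv : G.Adj S u v) : G.Adj S' u v := by
  obtain ⟨f, hf, hj⟩ := huv; exact ⟨f, h hf, hj⟩

lemma eqvGen_mono {G : DirGraph V E} {S S' : Set E} (h : S ⊆ S') {u v : V}
    (huv : EqvGen (G.Adj S) u v) : EqvGen (G.Adj S') u v :=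
  Relation.EqvGen.mono (fun _ _ hab => adj_mono h hab) _ _ huv

lemma eqvGen_insert_elim {G : DirGraph V E} {S : Set E} {f : E}
    (hf : EqvGen (G.Adj S) (G.src f) (G.tgt f)) {u v : V}
    (h : EqvGen (G.Adj (insert f S)) u v) : EqvGen (G.Adj S) u v := by
  induction h with
  | rel a b hab =>
      obtain ⟨g, hg, hj⟩ := hab
      rcases Set.mem_insert_iff.mp hg with rfl | hg
      · rcases hj with ⟨ha, hb⟩ | ⟨ha, hb⟩
        · rw [← ha, ← hb]; exact hf
        · rw [← ha, ← hb]; exact hf.symm _ _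
      · exact EqvGen.rel _ _ ⟨g, hg, hj⟩
  | refl a => exact EqvGen.refl a
  | symm a b _ ih => exact ih.symm _ _
  | trans a b c _ _ ih1 ih2 => exact ih1.trans _ _ _ ih2

lemma numComponents_congr {G : DirGraph V E} {S S' : Set E}
    (h : ∀ u v, EqvGen (G.Adj S) u v ↔ EqvGen (G.Adj S') u v) :
    G.numComponents S = G.numComponents S' := by
  have : Relation.EqvGen.setoid (G.Adj S) = Relation.EqvGen.setoid (G.Adj S') := by
    apply Setoid.ext; exact h
  unfold numComponents; rw [this]

lemma numComponents_eq_one {G : DirGraph V E} [Finite V] [Nonempty V] {S : Set E}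
    (h : ∀ u v, EqvGen (G.Adj S) u v) : G.numComponents S = 1 := by
  rw [numComponents, Nat.card_eq_one_iff_unique]
  refine ⟨⟨fun a b => Quotient.inductionOn₂ a b fun u v => Quotient.sound (h u v)⟩, ?_⟩
  exact ⟨Quotient.mk _ (Classical.arbitrary V)⟩

lemma numComponents_pos (G : DirGraph V E) [Finite V] [Nonempty V] (S : Set E) :
    0 < G.numComponents S := by
  have h1 : Nonempty (Quotient (Relation.EqvGen.setoid (G.Adj S))) :=
    ⟨Quotient.mk _ (Classical.arbitrary V)⟩
  have h2 : Finite (Quotient (Relation.EqvGen.setoid (G.Adj S))) := Quotient.finite _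
  exact Nat.card_pos

lemma numComponents_empty (G : DirGraph V E) [Fintype V] :
    G.numComponents (∅ : Set E) = Fintype.card V := by
  have key : ∀ u v : V, EqvGen (G.Adj (∅ : Set E)) u v → u = v := by
    intro u v h
    induction h with
    | rel a b hab => obtain ⟨g, hg, _⟩ := hab; exact absurd hg (Set.notMem_empty g)
    | refl a => rfl
    | symm a b _ ih => exact ih.symm
    | trans a b c _ _ ih1 ih2 => exact ih1.trans ih2
  rw [numComponents, ← Nat.card_eq_fintype_card]
  refine (Nat.card_congr (Equiv.ofBijective
    (fun v => (Quotient.mk _ v : Quotient (Relation.EqvGen.setoid (G.Adj (∅ : Set E)))))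
    ⟨?_, ?_⟩)).symm
  · intro u v h
    exact key u v (Quotient.exact h)
  · intro q; exact Quotient.inductionOn q fun u => ⟨u, rfl⟩

lemma numComponents_le_insert {G : DirGraph V E} [Finite V] (S : Set E) (f : E) :
    G.numComponents S ≤ G.numComponents (insert f S) + 1 := by
  classical
  set a := G.src f with ha
  set b := G.tgt f with hb
  set r := fun u v => EqvGen (G.Adj S) u v with hr
  have hrs : ∀ u v, r u v → r v u := fun u v h => h.symm _ _
  have hrt : ∀ u v w, r u v → r v w → r u w := fun u v w h1 h2 => h1.trans _ _ _ h2
  have key : ∀ u v, EqvGen (G.Adj (insert f S)) u v →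
      r u v ∨ (r u a ∧ r b v) ∨ (r u b ∧ r a v) := by
    intro u v h
    induction h with
    | rel x y hxy =>
        obtain ⟨g, hg, hj⟩ := hxy
        rcases Set.mem_insert_iff.mp hg with rfl | hg
        · rcases hj with ⟨h1, h2⟩ | ⟨h1, h2⟩
          · exact Or.inr <| Or.inl ⟨h1 ▸ EqvGen.refl _, h2 ▸ EqvGen.refl _⟩
          · exact Or.inr <| Or.inr ⟨h2 ▸ EqvGen.refl _, h1 ▸ EqvGen.refl _⟩
        · exact Or.inl (EqvGen.rel _ _ ⟨g, hg, hj⟩)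
    | refl x => exact Or.inl (EqvGen.refl x)
    | symm x y _ ih =>
        rcases ih with h | ⟨h1, h2⟩ | ⟨h1, h2⟩
        · exact Or.inl (hrs _ _ h)
        · exact Or.inr <| Or.inr ⟨hrs _ _ h2, hrs _ _ h1⟩
        · exact Or.inr <| Or.inl ⟨hrs _ _ h2, hrs _ _ h1⟩
    | trans x y z _ _ ih1 ih2 =>
        rcases ih1 with h | ⟨h1, h2⟩ | ⟨h1, h2⟩ <;>
          rcases ih2 with h' | ⟨h1', h2'⟩ | ⟨h1', h2'⟩
        · exact Or.inl (hrt _ _ _ h h')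
        · exact Or.inr <| Or.inl ⟨hrt _ _ _ h h1', h2'⟩
        · exact Or.inr <| Or.inr ⟨hrt _ _ _ h h1', h2'⟩
        · exact Or.inr <| Or.inl ⟨h1, hrt _ _ _ h2 h'⟩
        · exact Or.inl (hrt _ _ _ h1 (hrt _ _ _ (hrs _ _ (hrt _ _ _ h2 h1')) h2'))
        · exact Or.inl (hrt _ _ _ h1 h2')
        · exact Or.inr <| Or.inr ⟨h1, hrt _ _ _ h2 h'⟩
        · exact Or.inl (hrt _ _ _ h1 h2')
        · exact Or.inl (hrt _ _ _ h1 (hrt _ _ _ (hrs _ _ (hrt _ _ _ h2 h1')) h2'))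
  set Q' := Quotient (Relation.EqvGen.setoid (G.Adj S)) with hQ'
  set Q := Quotient (Relation.EqvGen.setoid (G.Adj (insert f S))) with hQ
  let φ : Q' → Q := Quotient.map id (fun u v h => eqvGen_mono (Set.subset_insert f S) h)
  let qa : Q' := Quotient.mk _ a
  let qb : Q' := Quotient.mk _ b
  let ψ : Q' → Q ⊕ Unit := fun q => if q = qb ∧ qa ≠ qb then Sum.inr () else Sum.inl (φ q)
  have hφ : ∀ u v : V, φ (Quotient.mk _ u) = φ (Quotient.mk _ v) →
      EqvGen (G.Adj (insert f S)) u v := by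
    intro u v h
    exact Quotient.exact h
  have hinj : Function.Injective ψ := by
    intro q1 q2 h
    simp only [ψ] at h
    by_cases h1 : q1 = qb ∧ qa ≠ qb <;> by_cases h2 : q2 = qb ∧ qa ≠ qb
    · exact h1.1.trans h2.1.symm
    · rw [if_pos h1, if_neg h2] at h; exact absurd h (by simp)
    · rw [if_neg h1, if_pos h2] at h; exact absurd h (by simp)
    · rw [if_neg h1, if_neg h2] at h
      replace h : φ q1 = φ q2 := by simpa using h
      obtain ⟨u, rfl⟩ := Quotient.exists_rep q1
      obtain ⟨v, rfl⟩ := Quotient.exists_rep q2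
      have huv := hφ u v h
      rcases key u v huv with h' | ⟨hA, hB⟩ | ⟨hA, hB⟩
      · exact Quotient.sound h'
      · by_cases hab : qa = qb
        · have hab' : r a b := Quotient.exact hab
          exact Quotient.sound (hrt _ _ _ hA (hrt _ _ _ hab' hB))
        · exact absurd ⟨Quotient.sound (hrs _ _ hB), hab⟩ h2
      · by_cases hab : qa = qb
        · have hab' : r a b := Quotient.exact hab
          exact Quotient.sound (hrt _ _ _ hA (hrt _ _ _ (hrs _ _ hab') hB))
        · exact absurd ⟨Quotient.sound hA, hab⟩ h1
  calc G.numComponents S = Nat.card Q' := rfl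
    _ ≤ Nat.card (Q ⊕ Unit) := Nat.card_le_card_of_injective ψ hinj
    _ = Nat.card Q + 1 := by rw [Nat.card_sum]; simp
    _ = G.numComponents (insert f S) + 1 := rfl

lemma card_le_numComponents_add_card (G : DirGraph V E) [Fintype V] [DecidableEq E]
    (S : Finset E) : Fintype.card V ≤ G.numComponents ↑S + S.card := by
  classical
  induction S using Finset.induction_on with
  | empty => simpa using (numComponents_empty G (E := E)).symm.le
  | insert _ _ hfs =>
      rename_i f S ih
      have h1 := numComponents_le_insert (G := G) (↑S : Set E) f
      have h2 : ((insert f S : Finset E) : Set E) = insert f ↑S := by simp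
      rw [h2, Finset.card_insert_of_notMem hfs]
      omega

section Deg

variable [Fintype V] [Fintype E] [DecidableEq V] [DecidableEq E]

lemma degOn_pos_of_mem {G : DirGraph V E} {S : Finset E} {f : E} (hf : f ∈ S) :
    G.degOn S (G.src f) ≠ 0 ∧ G.degOn S (G.tgt f) ≠ 0 := by
  constructor <;>
  · intro h
    rw [degOn, Finset.sum_eq_zero_iff] at h
    have := h f hf
    split_ifs at this <;> simp_all

lemma exists_edge_of_degOn_ne_zero {G : DirGraph V E} {S : Finset E} {v : V}
    (h : G.degOn S v ≠ 0) : ∃ f ∈ S, G.src f = v ∨ G.tgt f = v := by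
  by_contra hc
  push_neg at hc
  apply h
  rw [degOn]
  refine Finset.sum_eq_zero fun f hf => ?_
  obtain ⟨h1, h2⟩ := hc f hf
  simp [h1, h2]

lemma sum_degOn_eq (G : DirGraph V E) (S : Finset E) (K : Finset V) :
    ∑ v ∈ K, G.degOn S v
      = ∑ f ∈ S, ((if G.src f ∈ K then 1 else 0) + (if G.tgt f ∈ K then 1 else 0)) := by
  simp only [degOn]
  rw [Finset.sum_comm]
  refine Finset.sum_congr rfl fun f _ => ?_
  rw [Finset.sum_add_distrib, Finset.sum_ite_eq, Finset.sum_ite_eq]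

lemma even_sum_degOn {G : DirGraph V E} {S : Finset E} {K : Finset V}
    (hK : ∀ f ∈ S, (G.src f ∈ K ↔ G.tgt f ∈ K)) :
    Even (∑ v ∈ K, G.degOn S v) := by
  rw [sum_degOn_eq]
  rw [even_iff_two_dvd]
  refine Finset.dvd_sum fun f hf => ?_
  by_cases h1 : G.src f ∈ K
  · rw [if_pos h1, if_pos ((hK f hf).mp h1)]
    norm_num
  · rw [if_neg h1, if_neg (fun h2 => h1 ((hK f hf).mpr h2))]
    norm_num

lemma handshake (G : DirGraph V E) (S : Finset E) :
    ∑ v : V, G.degOn S v = 2 * S.card := by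
  rw [sum_degOn_eq]
  simp only [if_pos (Finset.mem_univ _)]
  rw [Finset.sum_add_distrib]
  simp [two_mul]

lemma cycle_erase_connects {G : DirGraph V E} {C : Finset E}
    (hC : ∀ v, G.degOn C v = 0 ∨ G.degOn C v = 2) {e : E} (he : e ∈ C) :
    EqvGen (G.Adj ↑(C.erase e)) (G.src e) (G.tgt e) := by
  classical
  set C' := C.erase e with hC'
  set K : Finset V := Finset.univ.filter (fun v => EqvGen (G.Adj ↑C') (G.src e) v) with hK
  have haK : G.src e ∈ K := by simp [hK, EqvGen.refl]
  have hclosed : ∀ f ∈ C', (G.src f ∈ K ↔ G.tgt f ∈ K) := by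
    intro f hf
    have hadj : G.Adj ↑C' (G.src f) (G.tgt f) := ⟨f, by simpa using hf, Or.inl ⟨rfl, rfl⟩⟩
    simp only [hK, Finset.mem_filter, Finset.mem_univ, true_and]
    exact ⟨fun h => h.trans _ _ _ (EqvGen.rel _ _ hadj),
      fun h => h.trans _ _ _ ((EqvGen.rel _ _ hadj).symm _ _)⟩
  have heven := even_sum_degOn (G := G) hclosed
  have hsplit : ∀ v, G.degOn C v
      = G.degOn C' v + ((if G.src e = v then 1 else 0) + (if G.tgt e = v then 1 else 0)) := by
    intro v
    rw [degOn, degOn, Finset.sum_erase_add _ _ he]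
  have hsum : ∑ v ∈ K, G.degOn C v
      = ∑ v ∈ K, G.degOn C' v
        + ((if G.src e ∈ K then 1 else 0) + (if G.tgt e ∈ K then 1 else 0)) := by
    simp only [hsplit]
    rw [Finset.sum_add_distrib, Finset.sum_add_distrib, Finset.sum_ite_eq, Finset.sum_ite_eq]
  have hevenC : Even (∑ v ∈ K, G.degOn C v) := by
    rw [even_iff_two_dvd]
    refine Finset.dvd_sum fun v _ => ?_
    rcases hC v with h | h <;> rw [h] <;> norm_num
  have hbK : G.tgt e ∈ K := by
    by_contra hb
    rw [hsum, if_pos haK, if_neg hb] at hevenC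
    obtain ⟨k, hk⟩ := heven
    obtain ⟨m, hm⟩ := hevenC
    omega
  simpa [hK] using hbK

lemma numComponents_cycle {G : DirGraph V E} {C : Finset E} (hC : G.IsSimpleCycle C) :
    G.numComponents ↑C + C.card = Fintype.card V + 1 := by
  classical
  obtain ⟨hne, hdeg, hconn⟩ := hC
  set W : Finset V := Finset.univ.filter (fun v => ¬ G.degOn C v = 0) with hW
  have hWcard : W.card = C.card := by
    have h1 : ∑ v : V, G.degOn C v = 2 * W.card := by
      rw [← Finset.sum_filter_add_sum_filter_not Finset.univ (fun v => ¬ G.degOn C v = 0)]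
      have h2 : ∑ v ∈ Finset.univ.filter (fun v => ¬ ¬ G.degOn C v = 0), G.degOn C v = 0 :=
        Finset.sum_eq_zero fun v hv => by simpa using (Finset.mem_filter.mp hv).2
      have h3 : ∑ v ∈ W, G.degOn C v = 2 * W.card := by
        rw [Finset.sum_congr rfl (fun v hv => ?_), Finset.sum_const, smul_eq_mul, mul_comm]
        rcases hdeg v with h | h
        · exact absurd h (Finset.mem_filter.mp hv).2
        · exact h
      rw [h3, h2, add_zero]
    have := handshake G C
    omega
  set g : V → Option {v : V // G.degOn C v = 0} :=
    fun v => if h : G.degOn C v = 0 then some ⟨v, h⟩ else none with hg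
  have hg_iff : ∀ u v : V, EqvGen (G.Adj ↑C) u v ↔ g u = g v := by
    intro u v
    constructor
    · intro h
      induction h with
      | rel x y hxy =>
          obtain ⟨f, hf, hj⟩ := hxy
          have hs := degOn_pos_of_mem (G := G) (Finset.mem_coe.mp hf)
          have hx : G.degOn C x ≠ 0 := by rcases hj with ⟨h1, _⟩ | ⟨_, h2⟩
                                          · exact h1 ▸ hs.1
                                          · exact h2 ▸ hs.2
          have hy : G.degOn C y ≠ 0 := by rcases hj with ⟨_, h2⟩ | ⟨h1, _⟩
                                          · exact h2 ▸ hs.2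
                                          · exact h1 ▸ hs.1
          rw [hg]; simp [dif_neg hx, dif_neg hy]
      | refl x => rfl
      | symm x y _ ih => exact ih.symm
      | trans x y z _ _ ih1 ih2 => exact ih1.trans ih2
    · intro h
      by_cases hu : G.degOn C u = 0 <;> by_cases hv : G.degOn C v = 0
      · simp only [hg, dif_pos hu, dif_pos hv, Option.some.injEq, Subtype.mk.injEq] at h
        exact h ▸ EqvGen.refl u
      · simp [hg, dif_pos hu, dif_neg hv] at h
      · simp [hg, dif_neg hu, dif_pos hv] at h
      · obtain ⟨f, hf, hjf⟩ := exists_edge_of_degOn_ne_zero hu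
        obtain ⟨f', hf', hjf'⟩ := exists_edge_of_degOn_ne_zero hv
        have h1 : EqvGen (G.Adj ↑C) u (G.src f) := by
          rcases hjf with h' | h'
          · exact h' ▸ EqvGen.refl _
          · exact (EqvGen.rel _ _ ⟨f, by simpa using hf, Or.inl ⟨rfl, h'⟩⟩).symm _ _
        have h2 : EqvGen (G.Adj ↑C) v (G.src f') := by
          rcases hjf' with h' | h'
          · exact h' ▸ EqvGen.refl _
          · exact (EqvGen.rel _ _ ⟨f', by simpa using hf', Or.inl ⟨rfl, h'⟩⟩).symm _ _
        exact (h1.trans _ _ _ (hconn f hf f' hf')).trans _ _ _ (h2.symm _ _)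
  have hbij : Function.Bijective
      (Quotient.lift g (fun u v h => (hg_iff u v).mp h)
        : Quotient (Relation.EqvGen.setoid (G.Adj ↑C)) → Option {v : V // G.degOn C v = 0}) := by
    constructor
    · intro q1 q2
      refine Quotient.inductionOn₂ q1 q2 fun u v h => ?_
      exact Quotient.sound ((hg_iff u v).mpr h)
    · intro o
      match o with
      | none =>
          obtain ⟨f, hf⟩ := hne
          refine ⟨Quotient.mk _ (G.src f), ?_⟩
          simp [hg, dif_neg (degOn_pos_of_mem (G := G) hf).1]
      | some ⟨v, hv⟩ => exact ⟨Quotient.mk _ v, by simp [hg, dif_pos hv]⟩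
  have hcard : G.numComponents ↑C = Nat.card (Option {v : V // G.degOn C v = 0}) :=
    Nat.card_congr (Equiv.ofBijective _ hbij)
  rw [hcard, Nat.card_eq_fintype_card, Fintype.card_option, Fintype.card_subtype]
  have hsplit := Finset.card_filter_add_card_filter_not
    (s := (Finset.univ : Finset V)) (p := fun v => G.degOn C v = 0)
  simp only [Finset.card_univ] at hsplit
  have hWc : (Finset.filter (fun v => ¬ G.degOn C v = 0) Finset.univ).card = C.card := hWcard
  omega

end Deg

section Walks

variable [DecidableEq V]

def nextV (G : DirGraph V E) (f : E) (u : V) : V :=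
  if G.src f = u then G.tgt f else G.src f

def IsWalk (G : DirGraph V E) : V → List E → V → Prop
  | u, [], v => u = v
  | u, f :: l, v => (G.src f = u ∨ G.tgt f = u) ∧ G.IsWalk (G.nextV f u) l v

def walkVerts (G : DirGraph V E) : V → List E → List V
  | u, [] => [u]
  | u, f :: l => u :: G.walkVerts (G.nextV f u) l

lemma nextV_endpoint {G : DirGraph V E} (f : E) (u : V) :
    G.nextV f u = G.src f ∨ G.nextV f u = G.tgt f := by
  unfold nextV; split_ifs <;> simp

lemma nextV_nextV {G : DirGraph V E} {f : E} {u : V} (h : G.src f = u ∨ G.tgt f = u) :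
    G.nextV f (G.nextV f u) = u := by
  unfold nextV
  rcases h with h | h <;> split_ifs <;> simp_all

lemma nextV_pair {G : DirGraph V E} {f : E} {u : V} (h : G.src f = u ∨ G.tgt f = u) :
    (G.src f = u ∧ G.tgt f = G.nextV f u) ∨ (G.src f = G.nextV f u ∧ G.tgt f = u) := by
  unfold nextV
  rcases h with h | h <;> split_ifs <;> simp_all

lemma isWalk_append {G : DirGraph V E} :
    ∀ (l : List E) (u v w : V), G.IsWalk u l v → (l' : List E) → G.IsWalk v l' w →
      G.IsWalk u (l ++ l') w
  | [], u, v, w, huv, l', hvw => by cases huv; exact hvw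
  | f :: l, u, v, w, huv, l', hvw => by
      exact ⟨huv.1, isWalk_append l _ v w huv.2 l' hvw⟩

lemma isWalk_reverse {G : DirGraph V E} :
    ∀ (l : List E) (u v : V), G.IsWalk u l v → G.IsWalk v l.reverse u
  | [], u, v, huv => by cases huv; exact rfl
  | f :: l, u, v, huv => by
      have h1 : G.IsWalk v l.reverse (G.nextV f u) := isWalk_reverse l _ v huv.2
      have h2 : G.IsWalk (G.nextV f u) [f] u := by
        refine ⟨?_, ?_⟩
        · rcases nextV_endpoint (G := G) f u with h | h
          · exact Or.inl h.symm
          · exact Or.inr h.symm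
        · show G.nextV f (G.nextV f u) = u
          exact nextV_nextV huv.1
      simpa using isWalk_append l.reverse v _ u h1 [f] h2

lemma isWalk_step {G : DirGraph V E} {S : Set E} {f : E} {u : V}
    (hf : f ∈ S) (h : G.src f = u ∨ G.tgt f = u) : G.Adj S u (G.nextV f u) := by
  refine ⟨f, hf, ?_⟩
  rcases nextV_pair h with ⟨h1, h2⟩ | ⟨h1, h2⟩
  · exact Or.inl ⟨h1, h2⟩
  · exact Or.inr ⟨h1, h2⟩

lemma isWalk_eqvGen {G : DirGraph V E} {S : Set E} :
    ∀ (l : List E) (u v : V), G.IsWalk u l v → (∀ f ∈ l, f ∈ S) →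
      EqvGen (G.Adj S) u v
  | [], u, v, huv, _ => by cases huv; exact EqvGen.refl u
  | f :: l, u, v, huv, hS => by
      refine (EqvGen.rel _ _ (isWalk_step (hS f (by simp)) huv.1)).trans _ _ _ ?_
      exact isWalk_eqvGen l _ v huv.2 (fun g hg => hS g (by simp [hg]))

lemma eqvGen_iff_walk {G : DirGraph V E} {S : Set E} {u v : V} :
    EqvGen (G.Adj S) u v ↔ ∃ l : List E, (∀ f ∈ l, f ∈ S) ∧ G.IsWalk u l v := by
  constructor
  · intro h
    induction h with
    | rel x y hxy =>
        obtain ⟨f, hf, hj⟩ := hxy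
        refine ⟨[f], by simpa using hf, ?_, ?_⟩
        · rcases hj with ⟨h1, _⟩ | ⟨_, h2⟩
          · exact Or.inl h1
          · exact Or.inr h2
        · show G.nextV f x = y
          unfold nextV
          rcases hj with ⟨h1, h2⟩ | ⟨h1, h2⟩ <;> split_ifs <;> simp_all
    | refl x => exact ⟨[], by simp, rfl⟩
    | symm x y _ ih =>
        obtain ⟨l, hl, hw⟩ := ih
        exact ⟨l.reverse, fun f hf => hl f (by simpa using hf), isWalk_reverse l x y hw⟩
    | trans x y z _ _ ih1 ih2 =>
        obtain ⟨l1, hl1, hw1⟩ := ih1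
        obtain ⟨l2, hl2, hw2⟩ := ih2
        refine ⟨l1 ++ l2, ?_, isWalk_append l1 x y z hw1 l2 hw2⟩
        intro f hf
        rcases List.mem_append.mp hf with h | h
        · exact hl1 f h
        · exact hl2 f h
  · rintro ⟨l, hl, hw⟩
    exact isWalk_eqvGen l u v hw hl

lemma mem_walkVerts_start (G : DirGraph V E) (u : V) (l : List E) :
    u ∈ G.walkVerts u l := by
  cases l <;> simp [walkVerts]

lemma walk_split {G : DirGraph V E} :
    ∀ (l : List E) (u v x : V), G.IsWalk u l v → x ∈ G.walkVerts u l →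
      ∃ l1 l2, l = l1 ++ l2 ∧ G.IsWalk u l1 x ∧ G.IsWalk x l2 v
  | [], u, v, x, hw, hx => by
      cases hw
      have : x = u := by simpa [walkVerts] using hx
      exact ⟨[], [], rfl, this.symm, this ▸ rfl⟩
  | f :: l, u, v, x, hw, hx => by
      rcases List.mem_cons.mp hx with rfl | hx'
      · exact ⟨[], f :: l, rfl, rfl, hw⟩
      · obtain ⟨l1, l2, h1, h2, h3⟩ := walk_split l _ v x hw.2 hx'
        exact ⟨f :: l1, l2, by rw [h1]; rfl, ⟨hw.1, h2⟩, h3⟩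

lemma walk_edge_endpoints {G : DirGraph V E} :
    ∀ (l : List E) (u v : V), G.IsWalk u l v → ∀ f ∈ l,
      G.src f ∈ G.walkVerts u l ∧ G.tgt f ∈ G.walkVerts u l
  | [], _, _, _, f, hf => by simp at hf
  | g :: l, u, v, hw, f, hf => by
      have hverts : G.walkVerts u (g :: l) = u :: G.walkVerts (G.nextV g u) l := rfl
      rcases List.mem_cons.mp hf with rfl | hf'
      · rcases nextV_pair hw.1 with ⟨h1, h2⟩ | ⟨h1, h2⟩
        · exact ⟨by simp [hverts, h1], by
            rw [hverts]; exact List.mem_cons_of_mem _ (h2 ▸ mem_walkVerts_start G _ l)⟩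
        · exact ⟨by
            rw [hverts]; exact List.mem_cons_of_mem _ (h1 ▸ mem_walkVerts_start G _ l),
            by simp [hverts, h2]⟩
      · have := walk_edge_endpoints l _ v hw.2 f hf'
        exact ⟨by rw [hverts]; exact List.mem_cons_of_mem _ this.1,
          by rw [hverts]; exact List.mem_cons_of_mem _ this.2⟩

lemma walk_shortcut {G : DirGraph V E} :
    ∀ (l : List E) (u v : V), G.IsWalk u l v → ¬ (G.walkVerts u l).Nodup →
      ∃ m, m.Sublist l ∧ m.length < l.length ∧ G.IsWalk u m v
  | [], u, v, hw, hnd => by simp [walkVerts] at hnd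
  | f :: l, u, v, hw, hnd => by
      have hverts : G.walkVerts u (f :: l) = u :: G.walkVerts (G.nextV f u) l := rfl
      rw [hverts, List.nodup_cons] at hnd
      push_neg at hnd
      by_cases hu : u ∈ G.walkVerts (G.nextV f u) l
      · obtain ⟨l1, l2, h1, _, h3⟩ := walk_split l _ v u hw.2 hu
        refine ⟨l2, ?_, ?_, h3⟩
        · have hs : l2.Sublist l := by rw [h1]; exact List.sublist_append_right l1 l2
          exact hs.trans (List.sublist_cons_self f l)
        · have : l.length = l1.length + l2.length := by rw [h1]; simp
          simp only [List.length_cons]; omega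
      · obtain ⟨m, hm1, hm2, hm3⟩ := walk_shortcut l _ v hw.2 (hnd hu)
        exact ⟨f :: m, hm1.cons₂ f, by simpa using hm2, ⟨hw.1, hm3⟩⟩

lemma exists_nodup_walk {G : DirGraph V E} :
    ∀ (n : ℕ) (l : List E) (u v : V), l.length ≤ n → G.IsWalk u l v →
      ∃ m, m.Sublist l ∧ G.IsWalk u m v ∧ (G.walkVerts u m).Nodup := by
  intro n
  induction n with
  | zero =>
      intro l u v hl hw
      rw [Nat.le_zero, List.length_eq_zero_iff] at hl
      subst hl
      exact ⟨[], List.Sublist.refl _, hw, by cases hw; simp [walkVerts]⟩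
  | succ n ih =>
      intro l u v hl hw
      by_cases hnd : (G.walkVerts u l).Nodup
      · exact ⟨l, List.Sublist.refl _, hw, hnd⟩
      · obtain ⟨m, hm1, hm2, hm3⟩ := walk_shortcut l u v hw hnd
        obtain ⟨m', h1, h2, h3⟩ := ih m u v (by omega) hm3
        exact ⟨m', h1.trans hm1, h2, h3⟩

variable [Fintype E] [DecidableEq E]

lemma walk_degOn {G : DirGraph V E} :
    ∀ (l : List E) (u v : V), G.IsWalk u l v → (G.walkVerts u l).Nodup → ∀ x : V,
      G.degOn l.toFinset x + ((if x = u then 1 else 0) + (if x = v then 1 else 0))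
        = if x ∈ G.walkVerts u l then 2 else 0
  | [], u, v, hw, hnd, x => by
      cases hw
      simp only [List.toFinset_nil, degOn, Finset.sum_empty, zero_add, walkVerts]
      by_cases h : x = u <;> simp [h]
  | f :: l, u, v, hw, hnd, x => by
      have hverts : G.walkVerts u (f :: l) = u :: G.walkVerts (G.nextV f u) l := rfl
      set u' := G.nextV f u with hu'
      rw [hverts, List.nodup_cons] at hnd
      obtain ⟨hun, hnd'⟩ := hnd
      have hu'mem : u' ∈ G.walkVerts u' l := mem_walkVerts_start G u' l
      have huu' : u ≠ u' := fun h => hun (h ▸ hu'mem)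
      have hpair := nextV_pair (G := G) hw.1
      rw [← hu'] at hpair
      have hfl : f ∉ l := by
        intro hf
        have := walk_edge_endpoints l u' v hw.2 f hf
        rcases hpair with ⟨h1, _⟩ | ⟨_, h2⟩
        · exact hun (h1 ▸ this.1)
        · exact hun (h2 ▸ this.2)
      have hdeg : G.degOn (f :: l).toFinset x
          = G.degOn l.toFinset x + ((if x = u then 1 else 0) + (if x = u' then 1 else 0)) := by
        rw [List.toFinset_cons, degOn, Finset.sum_insert (by simpa using hfl)]
        have : (if G.src f = x then 1 else 0) + (if G.tgt f = x then 1 else 0)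
            = (if x = u then 1 else 0) + (if x = u' then 1 else 0) := by
          rcases hpair with ⟨h1, h2⟩ | ⟨h1, h2⟩ <;> rw [h1, h2] <;>
            by_cases hxu : x = u <;> by_cases hxu' : x = u' <;> simp_all <;> first
              | (exact fun h => huu' h.symm)
              | (exact ⟨fun h => hxu h.symm, fun h => hxu' h.symm⟩)
              | (exact ⟨fun h => hxu' h.symm, fun h => hxu h.symm⟩)
        rw [this, degOn]
        ring
      have ih := walk_degOn l u' v hw.2 hnd' x
      rw [hdeg, hverts]
      split_ifs at ih ⊢ <;> first
        | omega
        | simp_all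
        | simp_all [eq_comm]

end Walks

section Cycles

variable [Fintype V] [Fintype E] [DecidableEq V] [DecidableEq E]

lemma exists_cycle {G : DirGraph V E} {S : Finset E} {e : E} (heS : e ∉ S)
    (h : EqvGen (G.Adj ↑S) (G.src e) (G.tgt e)) :
    ∃ C : Finset E, G.IsSimpleCycle C ∧ e ∈ C ∧ C ⊆ insert e S := by
  obtain ⟨l0, hl0S, hw0⟩ := eqvGen_iff_walk.mp h
  obtain ⟨l, hsub, hw, hnd⟩ := exists_nodup_walk l0.length l0 _ _ le_rfl hw0
  have hlS : ∀ f ∈ l, f ∈ S := fun f hf => hl0S f (hsub.subset hf)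
  have hel : e ∉ l.toFinset := fun hf => heS (hlS e (List.mem_toFinset.mp hf))
  refine ⟨insert e l.toFinset, ⟨⟨e, Finset.mem_insert_self e _⟩, ?_, ?_⟩,
    Finset.mem_insert_self e _, ?_⟩
  · intro x
    have hD := walk_degOn l (G.src e) (G.tgt e) hw hnd x
    have hdegC : G.degOn (insert e l.toFinset) x
        = G.degOn l.toFinset x
          + ((if G.src e = x then 1 else 0) + (if G.tgt e = x then 1 else 0)) := by
      rw [degOn, Finset.sum_insert hel, degOn]; ring
    have e1 : (if G.src e = x then (1:ℕ) else 0) = (if x = G.src e then 1 else 0) := by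
      simp [eq_comm]
    have e2 : (if G.tgt e = x then (1:ℕ) else 0) = (if x = G.tgt e then 1 else 0) := by
      simp [eq_comm]
    rw [hdegC, e1, e2]
    by_cases hx : x ∈ G.walkVerts (G.src e) l
    · rw [if_pos hx] at hD; right; omega
    · rw [if_neg hx] at hD; left; omega
  · intro f hf f' hf'
    have hvc : ∀ x ∈ G.walkVerts (G.src e) l,
        EqvGen (G.Adj ↑(insert e l.toFinset)) (G.src e) x := by
      intro x hx
      obtain ⟨l1, l2, h12, hw1, _⟩ := walk_split l _ _ x hw hx
      refine isWalk_eqvGen l1 _ x hw1 fun g hg => ?_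
      have : g ∈ l := h12 ▸ List.mem_append_left l2 hg
      exact Finset.mem_coe.mpr (Finset.mem_insert_of_mem (List.mem_toFinset.mpr this))
    have hsrc : ∀ g ∈ insert e l.toFinset, G.src g ∈ G.walkVerts (G.src e) l := by
      intro g hg
      rcases Finset.mem_insert.mp hg with rfl | hg'
      · exact mem_walkVerts_start G _ l
      · exact (walk_edge_endpoints l _ _ hw g (List.mem_toFinset.mp hg')).1
    exact ((hvc _ (hsrc f hf)).symm _ _).trans _ _ _ (hvc _ (hsrc f' hf'))
  · intro x hx
    rcases Finset.mem_insert.mp hx with rfl | hx'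
    · exact Finset.mem_insert_self _ _
    · exact Finset.mem_insert_of_mem (hlS x (List.mem_toFinset.mp hx'))

lemma cycle_subset_unique {G : DirGraph V E}
    {T : Finset E} (hT1 : ∀ u v : V, EqvGen (G.Adj ↑T) u v)
    (hT2 : T.card + 1 = Fintype.card V) {e : E} (heT : e ∉ T)
    {C C' : Finset E} (hC : G.IsSimpleCycle C) (hC' : G.IsSimpleCycle C')
    (heC : e ∈ C) (heC' : e ∈ C') (hCT : C ⊆ insert e T) (hCT' : C' ⊆ insert e T) :
    C = C' := by
  have hNE : Nonempty V := Fintype.card_pos_iff.mp (by omega)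
  have key : ∀ C1 C2 : Finset E, G.IsSimpleCycle C1 → G.IsSimpleCycle C2 → e ∈ C1 → e ∈ C2 →
      C1 ⊆ insert e T → C2 ⊆ insert e T → C1 ⊆ C2 := by
    intro C1 C2 h1 h2 he1 he2 hs1 hs2 f hf
    by_contra hfC2
    have hfe : f ≠ e := fun h => hfC2 (h ▸ he2)
    have hfT : f ∈ T := (Finset.mem_insert.mp (hs1 hf)).resolve_left hfe
    set T' := T.erase f with hT'
    have hee : EqvGen (G.Adj ↑T') (G.src e) (G.tgt e) := by
      refine eqvGen_mono ?_ (cycle_erase_connects h2.2.1 he2)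
      intro x hx
      have hx' := Finset.mem_erase.mp (Finset.mem_coe.mp hx)
      refine Finset.mem_coe.mpr (Finset.mem_erase.mpr ⟨fun hxf => ?_, ?_⟩)
      · exact hfC2 (hxf ▸ hx'.2)
      · exact (Finset.mem_insert.mp (hs2 hx'.2)).resolve_left hx'.1
    have hff : EqvGen (G.Adj ↑T') (G.src f) (G.tgt f) := by
      have h3 := cycle_erase_connects h1.2.1 hf
      have h4 : EqvGen (G.Adj (insert e ↑T')) (G.src f) (G.tgt f) := by
        refine eqvGen_mono ?_ h3
        intro x hx
        have hx' := Finset.mem_erase.mp (Finset.mem_coe.mp hx)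
        rcases Finset.mem_insert.mp (hs1 hx'.2) with h | h
        · exact Set.mem_insert_iff.mpr (Or.inl h)
        · exact Set.mem_insert_iff.mpr
            (Or.inr (Finset.mem_coe.mpr (Finset.mem_erase.mpr ⟨hx'.1, h⟩)))
      exact eqvGen_insert_elim hee h4
    have htot : ∀ u v : V, EqvGen (G.Adj ↑T') u v := by
      intro u v
      have h5 : EqvGen (G.Adj (insert f ↑T')) u v := by
        refine eqvGen_mono ?_ (hT1 u v)
        intro x hx
        rcases eq_or_ne x f with rfl | hxf
        · exact Set.mem_insert _ _
        · exact Set.mem_insert_iff.mpr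
            (Or.inr (Finset.mem_coe.mpr (Finset.mem_erase.mpr ⟨hxf, Finset.mem_coe.mp hx⟩)))
      exact eqvGen_insert_elim hff h5
    have h8 := card_le_numComponents_add_card G T'
    have h9 : G.numComponents ↑T' = 1 := numComponents_eq_one htot
    have h10 : T'.card = T.card - 1 := Finset.card_erase_of_mem hfT
    have h11 : 1 ≤ T.card := Finset.card_pos.mpr ⟨f, hfT⟩
    omega
  exact Finset.Subset.antisymm (key C C' hC hC' heC heC' hCT hCT')
    (key C' C hC' hC heC' heC hCT' hCT)

end Cycles

end DirGraph

open MvPolynomial in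
lemma pderiv_prod_X_aux {E : Type*} [DecidableEq E] (e : E) (s : Finset E) :
    MvPolynomial.pderiv e (∏ f ∈ s, (MvPolynomial.X f : MvPolynomial E ℤ))
      = if e ∈ s then ∏ f ∈ s.erase e, (MvPolynomial.X f : MvPolynomial E ℤ) else 0 := by
  classical
  induction s using Finset.induction_on with
  | empty => simp
  | @insert a s ha ih =>
      rw [Finset.prod_insert ha, pderiv_mul, pderiv_X, ih]
      by_cases he : e = a
      · subst he
        rw [Pi.single_eq_same, one_mul, if_neg ha, mul_zero, add_zero,
          if_pos (Finset.mem_insert_self e s), Finset.erase_insert ha]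
      · rw [Pi.single_eq_of_ne (Ne.symm he), zero_mul, zero_add]
        by_cases hes : e ∈ s
        · rw [if_pos hes, if_pos (Finset.mem_insert_of_mem hes),
            Finset.erase_insert_of_ne (Ne.symm he), Finset.prod_insert
              (fun hmem => ha (Finset.mem_of_mem_erase hmem))]
        · rw [if_neg hes, mul_zero, if_neg (by simp [he, hes])]


open Classical MvPolynomial in
/-- For a connected graph `G` and an edge `e` that is not a bridge, the diagonal cycle
polynomial satisfies `χ_G^{e,e} = ∑_{C simple cycle, e ∈ C} Ψ_{G/C} = Ψ_{G∖e}
= ∂Ψ_G/∂α_e` (as polynomials in the variables `α_f = X_f`). -/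
theorem cycle_polynomial_diagonal
    {V E : Type*} [Fintype V] [Fintype E] [DecidableEq V] [DecidableEq E]
    (G : DirGraph V E) (e : E)
    (hconn : ∀ u v : V, Relation.EqvGen (G.Adj Set.univ) u v)
    (hbridge : ¬ G.IsBridge e) :
    (∑ C : Finset E,
        if G.IsSimpleCycle C ∧ e ∈ C then
          G.kirchhoffContract C (fun f => (X f : MvPolynomial E ℤ))
        else 0)
        = G.kirchhoffOn {e}ᶜ (fun f => (X f : MvPolynomial E ℤ))
      ∧ G.kirchhoffOn {e}ᶜ (fun f => (X f : MvPolynomial E ℤ))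
        = pderiv e (G.kirchhoff fun f => (X f : MvPolynomial E ℤ)) := by
  classical
  have hNE : Nonempty V := ⟨G.src e⟩
  have hset : ((({e}ᶜ : Finset E) : Set E)) = {f : E | f ≠ e} := by
    ext f; simp
  have hconn' : ∀ u v : V, Relation.EqvGen (G.Adj ↑({e}ᶜ : Finset E)) u v := by
    have h := not_not.mp hbridge
    intro u v
    rw [hset]
    exact h u v
  have hnum : G.numComponents ↑({e}ᶜ : Finset E) = 1 := DirGraph.numComponents_eq_one hconn'
  have hKO : G.kirchhoffOn {e}ᶜ (fun f => (X f : MvPolynomial E ℤ))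
      = ∑ T : Finset E, if e ∉ T ∧ G.IsSpanningTree T
          then ∏ f ∈ {e}ᶜ \ T, (X f : MvPolynomial E ℤ) else 0 := by
    rw [DirGraph.kirchhoffOn]
    refine Finset.sum_congr rfl fun F _ => ?_
    refine if_congr ?_ rfl rfl
    constructor
    · rintro ⟨h1, h2, h3⟩
      rw [hnum] at h3
      refine ⟨fun heF => by simpa using h1 heF, fun u v => (h2 u v).mpr (hconn' u v), h3⟩
    · rintro ⟨h1, h2, h3⟩
      refine ⟨?_, fun u v => ⟨fun _ => hconn' u v, fun _ => h2 u v⟩, ?_⟩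
      · intro x hx
        simp only [Finset.mem_compl, Finset.mem_singleton]
        rintro rfl; exact h1 hx
      · rw [hnum]; exact h3
  constructor
  · -- first equality
    have hL : (∑ C : Finset E, if G.IsSimpleCycle C ∧ e ∈ C
          then G.kirchhoffContract C (fun f => (X f : MvPolynomial E ℤ)) else 0)
        = ∑ p ∈ (Finset.univ ×ˢ Finset.univ : Finset (Finset E × Finset E)),
            if (G.IsSimpleCycle p.1 ∧ e ∈ p.1) ∧ p.2 ⊆ p.1ᶜ
                ∧ (∀ u v : V, Relation.EqvGen (G.Adj ↑(p.2 ∪ p.1)) u v)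
                ∧ p.2.card + 1 = G.numComponents ↑p.1
              then ∏ f ∈ p.1ᶜ \ p.2, (X f : MvPolynomial E ℤ) else 0 := by
      rw [Finset.sum_product]
      refine Finset.sum_congr rfl fun C _ => ?_
      rw [DirGraph.kirchhoffContract]
      by_cases h : G.IsSimpleCycle C ∧ e ∈ C
      · rw [if_pos h]
        refine Finset.sum_congr rfl fun F _ => ?_
        exact if_congr (by tauto) rfl rfl
      · rw [if_neg h]
        exact (Finset.sum_eq_zero fun F _ => if_neg (fun hc => h hc.1)).symm
    rw [hL, hKO, ← Finset.sum_filter, ← Finset.sum_filter]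
    -- facts about the forward map
    have fwd : ∀ C F : Finset E,
        (G.IsSimpleCycle C ∧ e ∈ C) ∧ F ⊆ Cᶜ
          ∧ (∀ u v : V, Relation.EqvGen (G.Adj ↑(F ∪ C)) u v)
          ∧ F.card + 1 = G.numComponents ↑C →
        e ∉ F ∪ C.erase e ∧ G.IsSpanningTree (F ∪ C.erase e)
          ∧ C ⊆ insert e (F ∪ C.erase e) := by
      rintro C F ⟨⟨hcyc, heC⟩, hFC, htot, hFcard⟩
      have heF : e ∉ F := fun hx => by simpa [heC] using hFC hx
      have heT : e ∉ F ∪ C.erase e := by simp [heF]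
      have hCT : C ⊆ insert e (F ∪ C.erase e) := by
        intro x hx
        rcases eq_or_ne x e with rfl | hxe
        · exact Finset.mem_insert_self _ _
        · exact Finset.mem_insert_of_mem
            (Finset.mem_union_right _ (Finset.mem_erase.mpr ⟨hxe, hx⟩))
      have hFC' : F ∪ C = insert e (F ∪ C.erase e) := by
        ext x
        simp only [Finset.mem_union, Finset.mem_insert, Finset.mem_erase]
        constructor
        · rintro (hx | hx)
          · exact Or.inr (Or.inl hx)
          · rcases eq_or_ne x e with rfl | hxe
            · exact Or.inl rfl
            · exact Or.inr (Or.inr ⟨hxe, hx⟩)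
        · rintro (rfl | hx | ⟨_, hx⟩)
          · exact Or.inr heC
          · exact Or.inl hx
          · exact Or.inr hx
      have hend : Relation.EqvGen (G.Adj ↑(F ∪ C.erase e)) (G.src e) (G.tgt e) :=
        DirGraph.eqvGen_mono (by
          refine Finset.coe_subset.mpr ?_
          exact Finset.subset_union_right)
          (DirGraph.cycle_erase_connects hcyc.2.1 heC)
      have htot' : ∀ u v : V, Relation.EqvGen (G.Adj ↑(F ∪ C.erase e)) u v := by
        intro u v
        have h1 := htot u v
        rw [hFC'] at h1
        rw [Finset.coe_insert] at h1
        exact DirGraph.eqvGen_insert_elim hend h1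
      have hdis : Disjoint F (C.erase e) := by
        rw [Finset.disjoint_left]
        intro x hx hx'
        have := hFC hx
        simp only [Finset.mem_compl] at this
        exact this (Finset.mem_of_mem_erase hx')
      have hcount := DirGraph.numComponents_cycle hcyc
      have hC1 : 1 ≤ C.card := Finset.card_pos.mpr hcyc.1
      have hcardT : (F ∪ C.erase e).card = F.card + (C.card - 1) := by
        rw [Finset.card_union_of_disjoint hdis, Finset.card_erase_of_mem heC]
      exact ⟨heT, ⟨htot', by omega⟩, hCT⟩
    -- facts about the backward map
    have bwd : ∀ T : Finset E, e ∉ T → G.IsSpanningTree T →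
        ∀ C : Finset E, G.IsSimpleCycle C → e ∈ C → C ⊆ insert e T →
        (G.IsSimpleCycle C ∧ e ∈ C) ∧ (T \ C.erase e) ⊆ Cᶜ
          ∧ (∀ u v : V, Relation.EqvGen (G.Adj ↑((T \ C.erase e) ∪ C)) u v)
          ∧ (T \ C.erase e).card + 1 = G.numComponents ↑C := by
      intro T heT hST C hcyc heC hCT
      obtain ⟨htot, hcard⟩ := hST
      have hCe_sub_T : C.erase e ⊆ T := by
        intro x hx
        obtain ⟨hxe, hxC⟩ := Finset.mem_erase.mp hx
        exact (Finset.mem_insert.mp (hCT hxC)).resolve_left hxe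
      have hsub : T ⊆ (T \ C.erase e) ∪ C := by
        intro x hx
        by_cases hxC : x ∈ C
        · exact Finset.mem_union_right _ hxC
        · exact Finset.mem_union_left _ (Finset.mem_sdiff.mpr
            ⟨hx, fun hc => hxC (Finset.mem_of_mem_erase hc)⟩)
      have htot' : ∀ u v : V, Relation.EqvGen (G.Adj ↑((T \ C.erase e) ∪ C)) u v :=
        fun u v => DirGraph.eqvGen_mono (Finset.coe_subset.mpr hsub) (htot u v)
      have hFsub : (T \ C.erase e) ⊆ Cᶜ := by
        intro x hx
        obtain ⟨hxT, hxe⟩ := Finset.mem_sdiff.mp hx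
        refine Finset.mem_compl.mpr fun hxC => hxe (Finset.mem_erase.mpr ⟨?_, hxC⟩)
        rintro rfl; exact heT hxT
      have hcount := DirGraph.numComponents_cycle hcyc
      have hC1 : 1 ≤ C.card := Finset.card_pos.mpr hcyc.1
      have hpos := DirGraph.numComponents_pos G (↑C : Set E)
      have hcardF : (T \ C.erase e).card = T.card - (C.card - 1) := by
        rw [Finset.card_sdiff_of_subset hCe_sub_T, Finset.card_erase_of_mem heC]
      have hCle : C.erase e ⊆ T := hCe_sub_T
      have hCleCard : C.card - 1 ≤ T.card := by
        have := Finset.card_le_card hCe_sub_T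
        rwa [Finset.card_erase_of_mem heC] at this
      exact ⟨⟨hcyc, heC⟩, hFsub, htot', by omega⟩
    refine Finset.sum_bij' (fun p _ => p.2 ∪ p.1.erase e)
      (fun T hT =>
        ((G.exists_cycle ((Finset.mem_filter.mp hT).2.1)
            ((Finset.mem_filter.mp hT).2.2.1 (G.src e) (G.tgt e))).choose,
          T \ ((G.exists_cycle ((Finset.mem_filter.mp hT).2.1)
            ((Finset.mem_filter.mp hT).2.2.1 (G.src e) (G.tgt e))).choose).erase e))
      ?_ ?_ ?_ ?_ ?_
    · -- hi : image in target filter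
      intro p hp
      have hp' := (Finset.mem_filter.mp hp).2
      have := fwd p.1 p.2 hp'
      exact Finset.mem_filter.mpr ⟨Finset.mem_univ _, this.1, this.2.1⟩
    · -- hj : image in source filter
      intro T hT
      have hT' := (Finset.mem_filter.mp hT).2
      set hex := G.exists_cycle (hT'.1) (hT'.2.1 (G.src e) (G.tgt e)) with hhex
      obtain ⟨hcyc0, heC0, hCT0⟩ := hex.choose_spec
      have := bwd T hT'.1 hT'.2 hex.choose hcyc0 heC0 hCT0
      exact Finset.mem_filter.mpr ⟨Finset.mem_univ _, this⟩
    · -- left inverse : j (i p) = p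
      intro p hp
      have hp' := (Finset.mem_filter.mp hp).2
      obtain ⟨heT, hST, hCT⟩ := fwd p.1 p.2 hp'
      obtain ⟨⟨hcyc, heC⟩, hFC, htot, hFcard⟩ := hp'
      set T := p.2 ∪ p.1.erase e with hTdef
      have hmemT : T ∈ Finset.filter
          (fun T : Finset E => e ∉ T ∧ G.IsSpanningTree T) Finset.univ :=
        Finset.mem_filter.mpr ⟨Finset.mem_univ _, heT, hST⟩
      set hex := G.exists_cycle ((Finset.mem_filter.mp hmemT).2.1)
          ((Finset.mem_filter.mp hmemT).2.2.1 (G.src e) (G.tgt e)) with hhex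
      obtain ⟨hcyc0, heC0, hCT0⟩ := hex.choose_spec
      have hCeq : hex.choose = p.1 :=
        DirGraph.cycle_subset_unique hST.1 hST.2 heT hcyc0 hcyc heC0 heC hCT0 hCT
      have hFeq : T \ p.1.erase e = p.2 := by
        ext x
        simp only [Finset.mem_sdiff, hTdef, Finset.mem_union]
        constructor
        · rintro ⟨hx | hx, hnx⟩
          · exact hx
          · exact absurd hx hnx
        · intro hx
          refine ⟨Or.inl hx, fun hc => ?_⟩
          have := hFC hx
          simp only [Finset.mem_compl] at this
          exact this (Finset.mem_of_mem_erase hc)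
      refine Prod.ext ?_ ?_
      · exact hCeq
      · show T \ (hex.choose).erase e = p.2
        rw [hCeq]
        exact hFeq
    · -- right inverse : i (j T) = T
      intro T hT
      have hT' := (Finset.mem_filter.mp hT).2
      set hex := G.exists_cycle (hT'.1) (hT'.2.1 (G.src e) (G.tgt e)) with hhex
      obtain ⟨hcyc0, heC0, hCT0⟩ := hex.choose_spec
      have hCe_sub_T : hex.choose.erase e ⊆ T := by
        intro x hx
        obtain ⟨hxe, hxC⟩ := Finset.mem_erase.mp hx
        exact (Finset.mem_insert.mp (hCT0 hxC)).resolve_left hxe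
      exact Finset.sdiff_union_of_subset hCe_sub_T
    · -- products agree
      intro p hp
      have hp' := (Finset.mem_filter.mp hp).2
      obtain ⟨⟨hcyc, heC⟩, hFC, htot, hFcard⟩ := hp'
      refine Finset.prod_congr ?_ fun _ _ => rfl
      ext x
      simp only [Finset.mem_sdiff, Finset.mem_compl, Finset.mem_singleton,
        Finset.mem_union, Finset.mem_erase]
      constructor
      · rintro ⟨hxC, hxF⟩
        refine ⟨fun hc => hxC (hc ▸ heC), fun hc => ?_⟩
        rcases hc with hc | ⟨_, hc⟩
        · exact hxF hc
        · exact hxC hc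
      · rintro ⟨hxe, hx⟩
        push_neg at hx
        exact ⟨fun hc => (hx.2 hxe) hc, hx.1⟩
  · -- second equality
    rw [hKO, DirGraph.kirchhoff, map_sum]
    refine Finset.sum_congr rfl fun T _ => ?_
    rw [apply_ite (MvPolynomial.pderiv e), map_zero, pderiv_prod_X_aux]
    have hsets : ({e}ᶜ : Finset E) \ T = Tᶜ.erase e := by
      ext x
      simp only [Finset.mem_sdiff, Finset.mem_compl, Finset.mem_singleton, Finset.mem_erase]
      try tauto
    by_cases h1 : G.IsSpanningTree T <;> by_cases h2 : e ∈ T <;>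
      simp [h1, h2, hsets]
end
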